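/- arXiv:2110.09931 — 4 statements merged into one kernel-verified Lean document; each statement's English description precedes it below -/
import Mathlib

section
/- Let G be a connected simple graph with n vertices and m edges, let 0 = λ_1 < λ_2 ≤ ... ≤ λ_n be the eigenvalues of its Laplacian matrix, and let r_L(G) = λ_n/λ_2. Then BH(G) ≤ (n(n-1)²/(4(2m + M_1(G)))) · (r_L(G) + 1/r_L(G))². -/
open Finset Polynomial

/-- The eigenvalues of the Laplacian matrix of `G` over `ℝ`, as produced (in no
particular order) by the spectral theorem for symmetric matrices. -/
noncomputable def lapEigsUnordered {V : Type*} [Fintype V] [DecidableEq V]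
    (G : SimpleGraph V) [DecidableRel G.Adj] : V → ℝ :=
  (SimpleGraph.posSemidef_lapMatrix (R := ℝ) (G := G)).1.eigenvalues

/-- `μ : Fin n → ℝ` lists the eigenvalues of the Laplacian matrix of `G`
in nondecreasing order (so, `0`-based, `μ ⟨0,_⟩ = λ₁ ≤ μ ⟨1,_⟩ = λ₂ ≤ ⋯`). -/
def IsLapEigSeq {V : Type*} [Fintype V] [DecidableEq V] (G : SimpleGraph V)
    [DecidableRel G.Adj] {n : ℕ} (μ : Fin n → ℝ) : Prop :=
  Monotone μ ∧ ∃ e : V ≃ Fin n, ∀ v, lapEigsUnordered G v = μ (e v)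

lemma trace_sq_eq {n : Type*} [Fintype n] [DecidableEq n] (A : Matrix n n ℝ)
    (hA : A.IsHermitian) : (A * A).trace = ∑ i, hA.eigenvalues i ^ 2 := by
  conv_lhs => rw [hA.spectral_theorem]
  set U := (Matrix.IsHermitian.eigenvectorUnitary hA : Matrix n n ℝ)
  set D := Matrix.diagonal ((RCLike.ofReal : ℝ → ℝ) ∘ hA.eigenvalues)
  have hU : star U * U = 1 := (Matrix.mem_unitaryGroup_iff').mp (Matrix.IsHermitian.eigenvectorUnitary hA).2
  have : (U * D * star U) * (U * D * star U) = U * (D * D) * star U := by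
    simp only [mul_assoc]
    rw [← mul_assoc (star U) U, hU, one_mul]
  rw [Unitary.conjStarAlgAut_apply]
  rw [this, Matrix.trace_mul_cycle, ← mul_assoc, hU, one_mul]
  simp [D, Matrix.diagonal_mul_diagonal, Matrix.trace_diagonal, sq]

lemma trace_lap_sq {n : ℕ} (G : SimpleGraph (Fin n)) [DecidableRel G.Adj] :
    ((G.lapMatrix ℝ) * (G.lapMatrix ℝ)).trace
      = 2 * (G.edgeFinset.card : ℝ) + ∑ v, ((G.degree v : ℝ)) ^ 2 := by
  set L := G.lapMatrix ℝ with hL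
  have entry : ∀ i j, L i j = if i = j then (G.degree i : ℝ) else if G.Adj i j then -1 else 0 := by
    intro i j
    rcases eq_or_ne i j with h | h
    · subst h; simp [hL, SimpleGraph.lapMatrix, SimpleGraph.degMatrix]
    · simp [hL, SimpleGraph.lapMatrix, SimpleGraph.degMatrix, Matrix.diagonal, h]
      split_ifs <;> simp
  have term : ∀ i j, L i j * L j i
      = (if i = j then ((G.degree i : ℝ))^2 else 0) + (if G.Adj i j then 1 else 0) := by
    intro i j
    rcases eq_or_ne i j with h | h
    · subst h; simp [entry, sq]
    · rw [entry i j, entry j i, if_neg h, if_neg (Ne.symm h)]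
      by_cases hadj : G.Adj i j
      · simp [hadj, hadj.symm, h]
      · have : ¬ G.Adj j i := fun hh => hadj hh.symm
        simp [hadj, this, h]
  have : Matrix.trace (L * L) = ∑ i, ∑ j, L i j * L j i := by
    simp [Matrix.trace, Matrix.mul_apply]
  rw [this]
  simp_rw [term, Finset.sum_add_distrib]
  rw [add_comm]
  congr 1
  · simp_rw [← SimpleGraph.degree_eq_sum_if_adj]
    rw [← Nat.cast_sum, SimpleGraph.sum_degrees_eq_twice_card_edges]
    push_cast; ring
  · simp

lemma kantorovich {ι : Type*} (s : Finset ι) (x : ι → ℝ) (a b : ℝ) (ha : 0 < a) (hb : 0 < b)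
    (hx : ∀ i ∈ s, a ≤ x i ∧ x i ≤ b) :
    (∑ i ∈ s, x i) * (∑ i ∈ s, 1 / x i) ≤ (s.card : ℝ)^2 * (a+b)^2 / (4*(a*b)) := by
  have hxpos : ∀ i ∈ s, 0 < x i := fun i hi => lt_of_lt_of_le ha (hx i hi).1
  have h1 : ∀ i ∈ s, 1 / x i ≤ (a + b - x i) / (a*b) := by
    intro i hi
    rw [div_le_div_iff₀ (hxpos i hi) (by positivity)]
    nlinarith [(hx i hi).1, (hx i hi).2,
      mul_nonneg (sub_nonneg.2 (hx i hi).1) (sub_nonneg.2 (hx i hi).2)]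
  have h2 : (∑ i ∈ s, 1/x i) ≤ ((s.card : ℝ)*(a+b) - ∑ i ∈ s, x i)/(a*b) :=
    calc (∑ i ∈ s, 1/x i) ≤ ∑ i ∈ s, (a+b-x i)/(a*b) := Finset.sum_le_sum h1
    _ = _ := by rw [← Finset.sum_div, Finset.sum_sub_distrib, Finset.sum_const, nsmul_eq_mul]
  have hS : 0 ≤ ∑ i ∈ s, x i := Finset.sum_nonneg fun i hi => (hxpos i hi).le
  have h3 := mul_le_mul_of_nonneg_left h2 hS
  refine h3.trans ?_
  set S := ∑ i ∈ s, x i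
  set N := (s.card : ℝ)
  rw [mul_div_assoc', div_le_div_iff₀ (by positivity) (by positivity)]
  have hab : 0 < a*b := mul_pos ha hb
  nlinarith [sq_nonneg (N*(a+b) - 2*S), mul_pos ha hb, sq_nonneg (N*(a+b)-2*S), hab]


theorem statement_0 {n : ℕ} (hn : 2 ≤ n) (G : SimpleGraph (Fin n)) [DecidableRel G.Adj]
    (hG : G.Connected) (μ : Fin n → ℝ) (hμ : IsLapEigSeq G μ)
    (hμ1 : μ ⟨0, by omega⟩ = 0) (hμ2 : 0 < μ ⟨1, by omega⟩) :
    (n : ℝ) * ∑ i ∈ univ.filter (fun i : Fin n => 0 < i.val), 1 / μ i ^ 2 ≤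
      ((n : ℝ) * ((n : ℝ) - 1) ^ 2 / (4 * (2 * (G.edgeFinset.card : ℝ) + ∑ v, ((G.degree v : ℝ)) ^ 2))) *
        (μ ⟨n - 1, by omega⟩ / μ ⟨1, by omega⟩ + μ ⟨1, by omega⟩ / μ ⟨n - 1, by omega⟩) ^ 2 := by
  obtain ⟨hmono, e, he⟩ := hμ
  set s : Finset (Fin n) := univ.filter (fun i : Fin n => 0 < i.val) with hs
  set μ1 := μ ⟨1, by omega⟩ with hμ1def
  set μL := μ ⟨n - 1, by omega⟩ with hμLdef
  have h1L : μ1 ≤ μL := hmono (by simp [Fin.le_def]; omega)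
  have hμLpos : 0 < μL := lt_of_lt_of_le hμ2 h1L
  -- bounds on μ i for i ∈ s
  have hbounds : ∀ i ∈ s, μ1 ^ 2 ≤ μ i ^ 2 ∧ μ i ^ 2 ≤ μL ^ 2 := by
    intro i hi
    have hi' : 0 < i.val := by simpa [hs] using hi
    have h1 : μ1 ≤ μ i := hmono (by simp [Fin.le_def]; omega)
    have h2 : μ i ≤ μL := hmono (by simp [Fin.le_def]; omega)
    exact ⟨pow_le_pow_left₀ hμ2.le h1 2, pow_le_pow_left₀ (hμ2.le.trans h1) h2 2⟩
  -- card of s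
  have hcard : (s.card : ℝ) = (n : ℝ) - 1 := by
    have : s = univ.erase ⟨0, by omega⟩ := by
      ext i
      simp [hs, Finset.mem_erase, Fin.ext_iff]
      omega
    rw [this, Finset.card_erase_of_mem (Finset.mem_univ _)]
    simp [Nat.cast_sub (by omega : 1 ≤ n)]
  -- trace identity
  have htrace : ∑ i ∈ s, μ i ^ 2
      = 2 * (G.edgeFinset.card : ℝ) + ∑ v, ((G.degree v : ℝ)) ^ 2 := by
    have h0 : ∑ i, μ i ^ 2 = ∑ i ∈ s, μ i ^ 2 := by
      rw [← Finset.sum_filter_add_sum_filter_not univ (fun i : Fin n => 0 < i.val)]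
      have : ∑ i ∈ univ.filter (fun i : Fin n => ¬ 0 < i.val), μ i ^ 2 = 0 := by
        apply Finset.sum_eq_zero
        intro i hi
        have hv : i.val = 0 := by simp at hi; omega
        have hiz : i = (⟨0, by omega⟩ : Fin n) := Fin.ext hv
        rw [hiz, hμ1]
        ring
      rw [this, add_zero]
    have h1 : ∑ v, lapEigsUnordered G v ^ 2 = ∑ i, μ i ^ 2 := by
      rw [← Equiv.sum_comp e (fun i => μ i ^ 2)]
      exact Finset.sum_congr rfl fun v _ => by rw [he v]
    rw [← h0, ← h1, ← trace_lap_sq G,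
      trace_sq_eq (G.lapMatrix ℝ) (SimpleGraph.posSemidef_lapMatrix (R := ℝ) (G := G)).1]
    rfl
  set T := ∑ i ∈ s, μ i ^ 2 with hT
  have hTpos : 0 < T := by
    have h1s : (⟨1, by omega⟩ : Fin n) ∈ s := by simp [hs]
    have := Finset.single_le_sum (f := fun i => μ i ^ 2)
      (fun i hi => sq_nonneg _) h1s
    have : μ1 ^ 2 ≤ T := this
    nlinarith
  have hK := kantorovich s (fun i => μ i ^ 2) (μ1 ^ 2) (μL ^ 2)
    (by positivity) (by positivity) hbounds
  rw [hcard] at hK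
  set U := ∑ i ∈ s, 1 / μ i ^ 2 with hU
  have hUb : U ≤ ((n : ℝ) - 1)^2 * (μ1^2 + μL^2)^2 / (4*(μ1^2*μL^2)) / T := by
    rw [le_div_iff₀ hTpos]
    calc U * T = T * U := mul_comm _ _
    _ ≤ _ := hK
  have hrw : ((n : ℝ) * ((n : ℝ) - 1) ^ 2 / (4 * T)) * (μL / μ1 + μ1 / μL) ^ 2
      = (n : ℝ) * (((n : ℝ) - 1)^2 * (μ1^2 + μL^2)^2 / (4*(μ1^2*μL^2)) / T) := by
    field_simp
    ring
  rw [← htrace]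
  rw [hrw]
  exact mul_le_mul_of_nonneg_left hUb (by positivity)
end

section
/- Let G be a connected simple graph with n ≥ 3 vertices and Laplacian eigenvalues 0 = λ_1 < λ_2 ≤ ... ≤ λ_n, and let P = Π_{i=2}^{n} λ_i (which equals n·τ(G), where τ(G) is the number of spanning trees of G). Then Kf(G)²/(n(n−2)) − (n(n−1)/(n−2))·(1/P)^{2/(n−1)} ≤ BH(G) ≤ Kf(G)²/n − n(n−1)(n−2)·(1/P)^{2/(n−1)}. -/
open Finset Polynomial

namespace BHAux


lemma prod_pos_le_one (M : Multiset ℝ) (h : ∀ x ∈ M, 0 < x ∧ x ≤ 1) :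
    0 < M.prod ∧ M.prod ≤ 1 := by
  induction M using Multiset.induction_on with
  | empty => simp
  | cons a M ih =>
    have ha := h a (Multiset.mem_cons_self a M)
    have hM := ih (fun x hx => h x (Multiset.mem_cons_of_mem hx))
    simp only [Multiset.prod_cons]
    refine ⟨mul_pos ha.1 hM.1, ?_⟩
    nlinarith [ha.1, ha.2, hM.1, hM.2]

lemma one_le_prod_aux (M : Multiset ℝ) (h : ∀ x ∈ M, 1 ≤ x) : 1 ≤ M.prod := by
  induction M using Multiset.induction_on with
  | empty => simp
  | cons a M ih =>
    have ha := h a (Multiset.mem_cons_self a M)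
    have hM := ih (fun x hx => h x (Multiset.mem_cons_of_mem hx))
    simp only [Multiset.prod_cons]
    nlinarith

lemma exists_split (M : Multiset ℝ) (h2 : 2 ≤ Multiset.card M) (hpos : ∀ x ∈ M, 0 < x)
    (hprod : M.prod = 1) : ∃ u v rest, M = u ::ₘ v ::ₘ rest ∧ 1 ≤ u ∧ v ≤ 1 := by
  have hM0 : M ≠ 0 := by
    intro h; rw [h] at h2; simp at h2
  have hu : ∃ u ∈ M, 1 ≤ u := by
    by_contra hc
    push_neg at hc
    obtain ⟨a, ha⟩ := Multiset.exists_mem_of_ne_zero hM0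
    have h1 := prod_pos_le_one (M.erase a) (fun x hx =>
      ⟨hpos x (Multiset.mem_of_mem_erase hx), (hc x (Multiset.mem_of_mem_erase hx)).le⟩)
    have hpe : M.prod = a * (M.erase a).prod := by
      rw [← Multiset.prod_cons, Multiset.cons_erase ha]
    have := mul_le_of_le_one_right (hpos a ha).le h1.2
    have := hc a ha
    linarith [hpe ▸ hprod]
  obtain ⟨u, huM, hu1⟩ := hu
  have hMu : M = u ::ₘ M.erase u := (Multiset.cons_erase huM).symm
  have hcard1 : M.erase u ≠ 0 := by
    intro h
    rw [hMu, h] at h2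
    simp at h2
  have hpM : (1:ℝ) = u * (M.erase u).prod := by
    conv_lhs => rw [← hprod, hMu]
    rw [Multiset.prod_cons]
  have hv : ∃ v ∈ M.erase u, v ≤ 1 := by
    by_contra hc
    push_neg at hc
    obtain ⟨b, hb⟩ := Multiset.exists_mem_of_ne_zero hcard1
    have hrest : 1 ≤ ((M.erase u).erase b).prod := one_le_prod_aux _ (fun x hx =>
      (hc x (Multiset.mem_of_mem_erase hx)).le)
    have hb1 : 1 < b := hc b hb
    have hpM1 : (M.erase u).prod = b * ((M.erase u).erase b).prod := by
      rw [← Multiset.prod_cons, Multiset.cons_erase hb]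
    rw [hpM1] at hpM
    have hx1 : b ≤ b * ((M.erase u).erase b).prod :=
      le_mul_of_one_le_right (by linarith) hrest
    have hx2 : b * ((M.erase u).erase b).prod ≤ u * (b * ((M.erase u).erase b).prod) :=
      le_mul_of_one_le_left (by linarith) hu1
    linarith
  obtain ⟨v, hvM1, hv1⟩ := hv
  refine ⟨u, v, (M.erase u).erase v, ?_, hu1, hv1⟩
  calc M = u ::ₘ M.erase u := hMu
    _ = u ::ₘ v ::ₘ (M.erase u).erase v := by rw [Multiset.cons_erase hvM1]

lemma sum_quad_bound (B : ℝ) (M : Multiset ℝ) :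
    2 * B * M.sum ≤ (Multiset.card M : ℝ) * B ^ 2 + (M.map (fun x => x ^ 2)).sum := by
  induction M using Multiset.induction_on with
  | empty => simp
  | cons a M ih =>
    simp only [Multiset.sum_cons, Multiset.map_cons, Multiset.card_cons]
    push_cast
    nlinarith [sq_nonneg (B - a)]

lemma key : ∀ (k : ℕ) (M : Multiset ℝ), Multiset.card M = k → (∀ x ∈ M, 0 < x) →
    M.prod = 1 → M.sum ^ 2 ≤ ((k : ℝ) - 1) * (M.map (fun x => x ^ 2)).sum + k := by
  intro k
  induction k with
  | zero =>
    intro M hc _ _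
    rw [Multiset.card_eq_zero] at hc
    subst hc; simp
  | succ k ih =>
    intro M hc hpos hprod
    rcases Nat.eq_zero_or_pos k with hk | hk
    · subst hk
      rw [Multiset.card_eq_one] at hc
      obtain ⟨a, rfl⟩ := hc
      have ha : a = 1 := by simpa using hprod
      subst ha; norm_num
    · obtain ⟨u, v, rest, hM, hu, hv⟩ := exists_split M (by omega) hpos hprod
      subst hM
      have hupos : 0 < u := hpos u (by simp)
      have hvpos : 0 < v := hpos v (by simp)
      have hcard : Multiset.card rest = k - 1 := by
        simp only [Multiset.card_cons] at hc; omega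
      have hprodr : ((u * v) ::ₘ rest).prod = 1 := by
        simp only [Multiset.prod_cons] at hprod ⊢
        linarith [hprod, mul_assoc u v rest.prod]
      have hposr : ∀ x ∈ (u * v) ::ₘ rest, 0 < x := by
        intro x hx
        rcases Multiset.mem_cons.1 hx with h | h
        · subst h; exact mul_pos hupos hvpos
        · exact hpos x (by simp [h])
      have hcardr : Multiset.card ((u * v) ::ₘ rest) = k := by
        simp only [Multiset.card_cons, hcard]; omega
      have IH := ih _ hcardr hposr hprodr
      have HB := sum_quad_bound (u + v - u * v) rest
      simp only [Multiset.sum_cons, Multiset.map_cons, Multiset.card_cons] at IH ⊢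
      have hcr : ((Multiset.card rest : ℕ) : ℝ) = (k : ℝ) - 1 := by
        rw [hcard, Nat.cast_sub hk]
        push_cast; ring
      rw [hcr] at HB
      have hk1 : (0:ℝ) ≤ (k : ℝ) - 1 := by
        have h1 : (1:ℝ) ≤ (k:ℝ) := by exact_mod_cast hk
        linarith
      have hT3 : 0 ≤ ((k:ℝ) - 1) * (2 * u * v * (u - 1) * (1 - v)) := by
        apply mul_nonneg hk1
        have h1 : 0 ≤ u - 1 := by linarith
        have h2 : 0 ≤ 1 - v := by linarith
        positivity
      push_cast
      nlinarith [IH, HB, hT3, sq_nonneg (u * v - 1)]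

lemma amgm : ∀ (k : ℕ) (M : Multiset ℝ), Multiset.card M = k → (∀ x ∈ M, 0 < x) →
    M.prod = 1 → (k : ℝ) ≤ M.sum := by
  intro k
  induction k with
  | zero => intro M hc _ _; rw [Multiset.card_eq_zero] at hc; subst hc; simp
  | succ k ih =>
    intro M hc hpos hprod
    rcases Nat.eq_zero_or_pos k with hk | hk
    · subst hk
      rw [Multiset.card_eq_one] at hc
      obtain ⟨a, rfl⟩ := hc
      have ha : a = 1 := by simpa using hprod
      subst ha; norm_num
    · obtain ⟨u, v, rest, hM, hu, hv⟩ := exists_split M (by omega) hpos hprod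
      subst hM
      have hupos : 0 < u := hpos u (by simp)
      have hvpos : 0 < v := hpos v (by simp)
      have hcard : Multiset.card rest = k - 1 := by
        simp only [Multiset.card_cons] at hc; omega
      have hprodr : ((u * v) ::ₘ rest).prod = 1 := by
        simp only [Multiset.prod_cons] at hprod ⊢
        linarith [hprod, mul_assoc u v rest.prod]
      have hposr : ∀ x ∈ (u * v) ::ₘ rest, 0 < x := by
        intro x hx
        rcases Multiset.mem_cons.1 hx with h | h
        · subst h; exact mul_pos hupos hvpos
        · exact hpos x (by simp [h])
      have hcardr : Multiset.card ((u * v) ::ₘ rest) = k := by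
        simp only [Multiset.card_cons, hcard]; omega
      have IH := ih _ hcardr hposr hprodr
      simp only [Multiset.sum_cons] at IH ⊢
      push_cast
      nlinarith [IH, mul_nonneg (sub_nonneg.2 hu) (sub_nonneg.2 hv)]


lemma finset_both {ι : Type*} [DecidableEq ι] (s : Finset ι) (hs : 1 ≤ s.card)
    (b : ι → ℝ) (hpos : ∀ i ∈ s, 0 < b i) :
    (∑ i ∈ s, b i) ^ 2 ≤ ((s.card : ℝ) - 1) * (∑ i ∈ s, b i ^ 2) +
        (s.card : ℝ) * (∏ i ∈ s, b i) ^ ((2 : ℝ) / (s.card : ℝ)) ∧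
    (s.card : ℝ) * ((s.card : ℝ) - 1) * (∏ i ∈ s, b i) ^ ((2 : ℝ) / (s.card : ℝ)) +
        (∑ i ∈ s, b i ^ 2) ≤ (∑ i ∈ s, b i) ^ 2 := by
  have hmR : (0:ℝ) < (s.card : ℝ) := by exact_mod_cast hs
  have hP : 0 < ∏ i ∈ s, b i := Finset.prod_pos hpos
  set γ : ℝ := (∏ i ∈ s, b i) ^ ((1:ℝ)/(s.card : ℝ)) with hγdef
  have hγ : 0 < γ := Real.rpow_pos_of_pos hP _
  have hγm : γ ^ (s.card : ℕ) = ∏ i ∈ s, b i := by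
    rw [hγdef, ← Real.rpow_natCast ((∏ i ∈ s, b i) ^ ((1:ℝ)/(s.card:ℝ))) s.card,
      ← Real.rpow_mul hP.le]
    rw [one_div, inv_mul_cancel₀ (ne_of_gt hmR), Real.rpow_one]
  have hγ2 : γ ^ 2 = (∏ i ∈ s, b i) ^ ((2:ℝ)/(s.card:ℝ)) := by
    rw [hγdef, ← Real.rpow_natCast ((∏ i ∈ s, b i) ^ ((1:ℝ)/(s.card:ℝ))) 2,
      ← Real.rpow_mul hP.le]
    congr 1
    push_cast
    ring
  set c : ι → ℝ := fun i => b i / γ with hc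
  have hcpos : ∀ i ∈ s, 0 < c i := fun i hi => div_pos (hpos i hi) hγ
  have hcprod : ∏ i ∈ s, c i = 1 := by
    rw [hc]
    simp only
    rw [Finset.prod_div_distrib, Finset.prod_const, hγm, div_self (ne_of_gt hP)]
  have hbc : ∀ i ∈ s, b i = γ * c i := by
    intro i hi
    rw [hc]; field_simp
  have hS : ∑ i ∈ s, b i = γ * ∑ i ∈ s, c i := by
    rw [Finset.mul_sum]; exact Finset.sum_congr rfl hbc
  have hQ : ∑ i ∈ s, b i ^ 2 = γ ^ 2 * ∑ i ∈ s, c i ^ 2 := by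
    rw [Finset.mul_sum]
    refine Finset.sum_congr rfl fun i hi => ?_
    rw [hbc i hi]; ring
  -- K1 via key
  have hkey := key s.card (s.val.map c) (by simp)
    (by
      intro x hx
      obtain ⟨i, hi, rfl⟩ := Multiset.mem_map.1 hx
      exact hcpos i hi)
    (by rw [← Finset.prod_eq_multiset_prod]; exact hcprod)
  rw [← Finset.sum_eq_multiset_sum, Multiset.map_map] at hkey
  have hmap : ((s.val.map ((fun x : ℝ => x ^ 2) ∘ c))).sum = ∑ i ∈ s, c i ^ 2 := by
    rw [Finset.sum_eq_multiset_sum]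
    rfl
  rw [hmap] at hkey
  -- hkey : (∑ c)² ≤ (m-1) ∑ c² + m
  constructor
  · rw [hS, hQ, ← hγ2]
    nlinarith [mul_le_mul_of_nonneg_left hkey (sq_nonneg γ)]
  · -- second part via amgm on offDiag
    have hsq : ∏ p ∈ s ×ˢ s, (c p.1 * c p.2) = 1 := by
      rw [Finset.prod_product]
      have h1 : ∀ i ∈ s, ∏ j ∈ s, (c i * c j) = c i ^ s.card := by
        intro i hi
        rw [Finset.prod_mul_distrib, Finset.prod_const, hcprod, mul_one]
      rw [Finset.prod_congr rfl h1, Finset.prod_pow, hcprod, one_pow]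
    have hdiag : ∏ p ∈ s.diag, (c p.1 * c p.2) = 1 := by
      rw [Finset.prod_diag, Finset.prod_mul_distrib, hcprod, mul_one]
    have hoffp : ∏ p ∈ s.offDiag, (c p.1 * c p.2) = 1 := by
      have hu := Finset.prod_union (f := fun p : ι × ι => c p.1 * c p.2)
        (Finset.disjoint_diag_offDiag s)
      rw [Finset.diag_union_offDiag, hsq, hdiag, one_mul] at hu
      exact hu.symm
    have hsqsum : ∑ p ∈ s ×ˢ s, (c p.1 * c p.2) = (∑ i ∈ s, c i) ^ 2 := by
      rw [Finset.sum_product]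
      have h1 : ∀ i ∈ s, ∑ j ∈ s, (c i * c j) = c i * ∑ j ∈ s, c j := by
        intro i hi; rw [Finset.mul_sum]
      rw [Finset.sum_congr rfl h1, ← Finset.sum_mul]
      ring
    have hdsum : ∑ p ∈ s.diag, (c p.1 * c p.2) = ∑ i ∈ s, c i ^ 2 := by
      rw [Finset.sum_diag]
      exact Finset.sum_congr rfl fun i _ => (sq (c i)).symm
    have hoffsum : ∑ p ∈ s.offDiag, (c p.1 * c p.2) =
        (∑ i ∈ s, c i) ^ 2 - ∑ i ∈ s, c i ^ 2 := by
      have hu := Finset.sum_union (f := fun p : ι × ι => c p.1 * c p.2)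
        (Finset.disjoint_diag_offDiag s)
      rw [Finset.diag_union_offDiag, hsqsum, hdsum] at hu
      linarith
    have hamgm := amgm (s.card * s.card - s.card)
      (s.offDiag.val.map (fun p => c p.1 * c p.2))
      (by simp [Finset.offDiag_card])
      (by
        intro x hx
        obtain ⟨p, hp, rfl⟩ := Multiset.mem_map.1 hx
        have hp' := Finset.mem_offDiag.1 hp
        exact mul_pos (hcpos _ hp'.1) (hcpos _ hp'.2.1))
      (by rw [← Finset.prod_eq_multiset_prod]; exact hoffp)
    rw [← Finset.sum_eq_multiset_sum, hoffsum] at hamgm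
    have hcast : ((s.card * s.card - s.card : ℕ) : ℝ) = (s.card:ℝ) * ((s.card:ℝ) - 1) := by
      rw [Nat.cast_sub (Nat.le_mul_of_pos_left s.card hs)]
      push_cast; ring
    rw [hcast] at hamgm
    rw [hS, hQ, ← hγ2]
    nlinarith [mul_le_mul_of_nonneg_left hamgm (sq_nonneg γ)]

end BHAux

theorem statement_6 {n : ℕ} (hn : 3 ≤ n) (G : SimpleGraph (Fin n)) [DecidableRel G.Adj]
    (hG : G.Connected) (μ : Fin n → ℝ) (hμ : IsLapEigSeq G μ)
    (hμ1 : μ ⟨0, by omega⟩ = 0) (hμ2 : 0 < μ ⟨1, by omega⟩) :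
    ((n : ℝ) * ∑ i ∈ univ.filter (fun i : Fin n => 0 < i.val), 1 / μ i) ^ 2 / ((n : ℝ) * ((n : ℝ) - 2)) -
        ((n : ℝ) * ((n : ℝ) - 1) / ((n : ℝ) - 2)) * (1 / (∏ i ∈ univ.filter (fun i : Fin n => 0 < i.val), μ i)) ^ ((2 : ℝ) / ((n : ℝ) - 1)) ≤
      (n : ℝ) * ∑ i ∈ univ.filter (fun i : Fin n => 0 < i.val), 1 / μ i ^ 2 ∧
    (n : ℝ) * ∑ i ∈ univ.filter (fun i : Fin n => 0 < i.val), 1 / μ i ^ 2 ≤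
      ((n : ℝ) * ∑ i ∈ univ.filter (fun i : Fin n => 0 < i.val), 1 / μ i) ^ 2 / (n : ℝ) -
        (n : ℝ) * ((n : ℝ) - 1) * ((n : ℝ) - 2) * (1 / (∏ i ∈ univ.filter (fun i : Fin n => 0 < i.val), μ i)) ^ ((2 : ℝ) / ((n : ℝ) - 1)) := by
  obtain ⟨hmono, -⟩ := hμ
  set T : Finset (Fin n) := univ.filter (fun i : Fin n => 0 < i.val) with hT
  have hpos : ∀ i ∈ T, 0 < μ i := by
    intro i hi
    rw [hT, Finset.mem_filter] at hi
    have h1 : (⟨1, by omega⟩ : Fin n) ≤ i := by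
      rw [Fin.le_def]
      exact hi.2
    exact lt_of_lt_of_le hμ2 (hmono h1)
  have hcard : T.card = n - 1 := by
    rw [hT]
    have he : univ.filter (fun i : Fin n => 0 < i.val) = univ.erase ⟨0, by omega⟩ := by
      ext i
      simp only [Finset.mem_filter, Finset.mem_univ, true_and, Finset.mem_erase, and_true,
        ne_eq, Fin.ext_iff, Fin.val_mk]
      omega
    rw [he, Finset.card_erase_of_mem (Finset.mem_univ _), Finset.card_univ, Fintype.card_fin]
  have hcardR : (T.card : ℝ) = (n : ℝ) - 1 := by
    rw [hcard, Nat.cast_sub (by omega : 1 ≤ n)]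
    push_cast; ring
  have hbpos : ∀ i ∈ T, 0 < 1 / μ i := fun i hi => by
    have := hpos i hi; positivity
  obtain ⟨H1, H2⟩ := BHAux.finset_both T (by rw [hcard]; omega) (fun i => 1 / μ i) hbpos
  -- translate
  have hsum2 : ∑ i ∈ T, (1 / μ i) ^ 2 = ∑ i ∈ T, 1 / μ i ^ 2 :=
    Finset.sum_congr rfl fun i _ => by rw [div_pow, one_pow]
  have hprodb : ∏ i ∈ T, (1 / μ i) = 1 / ∏ i ∈ T, μ i := by
    rw [Finset.prod_div_distrib, Finset.prod_const_one]
  rw [hcardR, hsum2, hprodb] at H1 H2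
  have hn3 : (3:ℝ) ≤ (n:ℝ) := by exact_mod_cast hn
  have hn2 : (0:ℝ) < (n:ℝ) - 2 := by linarith
  have hnpos : (0:ℝ) < (n:ℝ) := by linarith
  set S : ℝ := ∑ i ∈ T, 1 / μ i with hSdef
  set Q : ℝ := ∑ i ∈ T, 1 / μ i ^ 2 with hQdef
  set g : ℝ := (1 / ∏ i ∈ T, μ i) ^ ((2:ℝ) / ((n:ℝ) - 1)) with hgdef
  constructor
  · rw [sub_le_iff_le_add, div_le_iff₀ (by positivity : (0:ℝ) < (n:ℝ) * ((n:ℝ) - 2))]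
    have hexp : ((n:ℝ) * ((n:ℝ) - 1) / ((n:ℝ) - 2)) * g * ((n:ℝ) * ((n:ℝ) - 2)) =
        (n:ℝ)^2 * ((n:ℝ) - 1) * g := by
      field_simp
    have H1n := mul_le_mul_of_nonneg_left H1 (by positivity : (0:ℝ) ≤ (n:ℝ)^2)
    nlinarith [H1n, hexp]
  · rw [le_sub_iff_add_le, le_div_iff₀ hnpos]
    have H2n := mul_le_mul_of_nonneg_left H2 (by positivity : (0:ℝ) ≤ (n:ℝ)^2)
    nlinarith [H2n]
end

section
/- Let S(a,b) be the double star on n vertices with a + b = n − 2, a ≥ 1, b ≥ 1. Then n² + 3n + 4/n − 16 ≤ BH(S(a,b)) ≤ n² − 2n + 4⌈(n−2)/2⌉⌊(n−2)/2⌋ + (⌈(n−2)/2⌉⌊(n−2)/2⌋ + 1)²/n, where the lower bound is attained exactly when {a,b} = {1, n−3} and the upper bound exactly when {a,b} = {⌈(n−2)/2⌉, ⌊(n−2)/2⌋}. -/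
open Finset Polynomial

/-- The double star `S(a,b)`: vertex `0` and vertex `1` are adjacent, vertex `0` has
the `a` pendant neighbours `2, …, a+1`, and vertex `1` has the `b` pendant
neighbours `a+2, …, a+b+1`. -/
def doubleStar (a b : ℕ) : SimpleGraph (Fin (a + b + 2)) :=
  SimpleGraph.fromRel (fun u v =>
    (u.val = 0 ∧ v.val = 1) ∨ (u.val = 0 ∧ 2 ≤ v.val ∧ v.val < a + 2) ∨
      (u.val = 1 ∧ a + 2 ≤ v.val))

noncomputable instance (a b : ℕ) : DecidableRel (doubleStar a b).Adj :=
  Classical.decRel _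

open Matrix

section General
namespace SpecAux

variable {m : ℕ} {A : Matrix (Fin m) (Fin m) ℝ} (hA : A.IsHermitian)

lemma eig_sum : ∑ i, hA.eigenvalues i = A.trace := by
  conv_rhs => rw [hA.spectral_theorem, Unitary.conjStarAlgAut_apply]
  rw [Matrix.trace_mul_cycle,
    (Matrix.mem_unitaryGroup_iff').mp (hA.eigenvectorUnitary).2]
  simp [Matrix.trace_diagonal]

lemma eig_sq_sum : ∑ i, (hA.eigenvalues i)^2 = (A * A).trace := by
  conv_rhs => rw [hA.spectral_theorem, Unitary.conjStarAlgAut_apply]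
  rw [show ∀ U D : Matrix (Fin m) (Fin m) ℝ, (U * D * star U) * (U * D * star U) =
      U * (D * (star U * U) * D) * star U from fun U D => by
        simp only [Matrix.mul_assoc],
    (Matrix.mem_unitaryGroup_iff').mp (hA.eigenvectorUnitary).2,
    Matrix.mul_one, Matrix.trace_mul_cycle, ← Matrix.mul_assoc,
    (Matrix.mem_unitaryGroup_iff').mp (hA.eigenvectorUnitary).2, Matrix.one_mul,
    diagonal_mul_diagonal]
  simp [Matrix.trace_diagonal, sq]

open Module in
lemma eig_count (t : ℝ) : (univ.filter (fun i => hA.eigenvalues i = t)).card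
    = finrank ℝ (LinearMap.ker (A - t • (1 : Matrix (Fin m) (Fin m) ℝ)).mulVecLin) := by
  have h1 : A - t • (1 : Matrix (Fin m) (Fin m) ℝ) =
      (hA.eigenvectorUnitary : Matrix (Fin m) (Fin m) ℝ) *
        diagonal (fun i => hA.eigenvalues i - t) *
        (star (hA.eigenvectorUnitary : Matrix (Fin m) (Fin m) ℝ)) := by
    have h2 : t • (1 : Matrix (Fin m) (Fin m) ℝ) =
        (hA.eigenvectorUnitary : Matrix (Fin m) (Fin m) ℝ) *
          (t • (1 : Matrix (Fin m) (Fin m) ℝ)) *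
          (star (hA.eigenvectorUnitary : Matrix (Fin m) (Fin m) ℝ)) := by
      rw [Matrix.mul_smul, Matrix.mul_one, Matrix.smul_mul,
        (Matrix.mem_unitaryGroup_iff).mp (hA.eigenvectorUnitary).2]
    conv_lhs => rw [hA.spectral_theorem, Unitary.conjStarAlgAut_apply, h2]
    rw [← Matrix.sub_mul, ← Matrix.mul_sub]
    congr 2
    rw [smul_one_eq_diagonal, diagonal_sub]
    rfl
  have hrank : (A - t • (1 : Matrix (Fin m) (Fin m) ℝ)).rank =
      (diagonal (fun i => hA.eigenvalues i - t)).rank := by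
    conv_lhs => rw [h1, ← Unitary.coe_star]
    simp [-isUnit_iff_ne_zero, -Unitary.coe_star]
  have hd : (diagonal (fun i => hA.eigenvalues i - t)).rank =
      (univ.filter (fun i => ¬ hA.eigenvalues i = t)).card := by
    rw [Matrix.rank_diagonal, Fintype.card_subtype]
    congr 1
    apply Finset.filter_congr
    intro i _
    simp [sub_eq_zero]
  have hrn := LinearMap.finrank_range_add_finrank_ker
    ((A - t • (1 : Matrix (Fin m) (Fin m) ℝ)).mulVecLin)
  rw [Module.finrank_fintype_fun_eq_card, Fintype.card_fin] at hrn
  have hsplit := Finset.card_filter_add_card_filter_not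
    (s := (univ : Finset (Fin m))) (p := fun i => hA.eigenvalues i = t)
  rw [Finset.card_univ, Fintype.card_fin] at hsplit
  have : (A - t • (1 : Matrix (Fin m) (Fin m) ℝ)).rank =
      finrank ℝ (LinearMap.range (A - t • (1 : Matrix (Fin m) (Fin m) ℝ)).mulVecLin) := rfl
  omega

lemma mem_eigKer_iff (t : ℝ) (v : Fin m → ℝ) :
    v ∈ LinearMap.ker (A - t • (1 : Matrix (Fin m) (Fin m) ℝ)).mulVecLin ↔ A *ᵥ v = t • v := by
  rw [LinearMap.mem_ker, mulVecLin_apply, sub_mulVec, smul_mulVec, one_mulVec,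
    sub_eq_zero]

end SpecAux
end General

namespace DSaux

variable (a b : ℕ)

def pv0 : Fin (a + b + 2) := ⟨0, by omega⟩
def pv1 : Fin (a + b + 2) := ⟨1, by omega⟩
noncomputable def PS0 : Finset (Fin (a + b + 2)) :=
  univ.filter (fun w => 2 ≤ w.val ∧ w.val < a + 2)
noncomputable def PS1 : Finset (Fin (a + b + 2)) :=
  univ.filter (fun w => a + 2 ≤ w.val)

lemma adj_iff (u v : Fin (a + b + 2)) : (doubleStar a b).Adj u v ↔
    (u.val = 0 ∧ v.val = 1) ∨ (v.val = 0 ∧ u.val = 1) ∨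
    (u.val = 0 ∧ 2 ≤ v.val ∧ v.val < a + 2) ∨ (v.val = 0 ∧ 2 ≤ u.val ∧ u.val < a + 2) ∨
    (u.val = 1 ∧ a + 2 ≤ v.val) ∨ (v.val = 1 ∧ a + 2 ≤ u.val) := by
  rw [doubleStar, SimpleGraph.fromRel_adj, ne_eq, Fin.ext_iff]
  omega

lemma card_PS0 : (PS0 a b).card = a := by
  rw [PS0, Finset.card_filter]
  rw [Fin.sum_univ_eq_sum_range (fun i => if 2 ≤ i ∧ i < a + 2 then 1 else 0)]
  rw [← Finset.card_filter]
  have : (Finset.range (a + b + 2)).filter (fun i => 2 ≤ i ∧ i < a + 2)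
      = Finset.Ico 2 (a + 2) := by
    ext i; simp [Finset.mem_filter, Finset.mem_range, Finset.mem_Ico]; omega
  rw [this, Nat.card_Ico]
  omega

lemma card_PS1 : (PS1 a b).card = b := by
  rw [PS1, Finset.card_filter]
  rw [Fin.sum_univ_eq_sum_range (fun i => if a + 2 ≤ i then 1 else 0)]
  rw [← Finset.card_filter]
  have : (Finset.range (a + b + 2)).filter (fun i => a + 2 ≤ i)
      = Finset.Ico (a + 2) (a + b + 2) := by
    ext i; simp [Finset.mem_filter, Finset.mem_range, Finset.mem_Ico]; omega
  rw [this, Nat.card_Ico]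
  omega

lemma nbr0 : (doubleStar a b).neighborFinset (pv0 a b) = insert (pv1 a b) (PS0 a b) := by
  ext w
  rw [SimpleGraph.mem_neighborFinset]
  simp only [SimpleGraph.mem_neighborFinset, adj_iff, Finset.mem_insert, PS0,
    Finset.mem_filter, Finset.mem_univ, true_and, and_true, Fin.ext_iff, pv0, pv1]
  omega

lemma nbr1 : (doubleStar a b).neighborFinset (pv1 a b) = insert (pv0 a b) (PS1 a b) := by
  ext w
  rw [SimpleGraph.mem_neighborFinset]
  simp only [SimpleGraph.mem_neighborFinset, adj_iff, Finset.mem_insert, PS1,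
    Finset.mem_filter, Finset.mem_univ, true_and, and_true, Fin.ext_iff, pv0, pv1]
  omega

lemma nbrP0 {u : Fin (a + b + 2)} (hu : u ∈ PS0 a b) :
    (doubleStar a b).neighborFinset u = {pv0 a b} := by
  rw [PS0, Finset.mem_filter] at hu
  ext w
  simp only [SimpleGraph.mem_neighborFinset, adj_iff, Finset.mem_singleton, Fin.ext_iff, pv0]
  omega

lemma nbrP1 {u : Fin (a + b + 2)} (hu : u ∈ PS1 a b) :
    (doubleStar a b).neighborFinset u = {pv1 a b} := by
  rw [PS1, Finset.mem_filter] at hu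
  ext w
  simp only [SimpleGraph.mem_neighborFinset, adj_iff, Finset.mem_singleton, Fin.ext_iff, pv1]
  omega

lemma pv1_not_mem_PS0 : pv1 a b ∉ PS0 a b := by
  simp [PS0, pv1]
lemma pv0_not_mem_PS1 : pv0 a b ∉ PS1 a b := by
  simp [PS1, pv0]

lemma deg0 : (doubleStar a b).degree (pv0 a b) = a + 1 := by
  rw [← SimpleGraph.card_neighborFinset_eq_degree, nbr0,
    Finset.card_insert_of_notMem (pv1_not_mem_PS0 a b), card_PS0]

lemma deg1 : (doubleStar a b).degree (pv1 a b) = b + 1 := by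
  rw [← SimpleGraph.card_neighborFinset_eq_degree, nbr1,
    Finset.card_insert_of_notMem (pv0_not_mem_PS1 a b), card_PS1]

lemma degP0 {u : Fin (a + b + 2)} (hu : u ∈ PS0 a b) : (doubleStar a b).degree u = 1 := by
  rw [← SimpleGraph.card_neighborFinset_eq_degree, nbrP0 a b hu, Finset.card_singleton]

lemma degP1 {u : Fin (a + b + 2)} (hu : u ∈ PS1 a b) : (doubleStar a b).degree u = 1 := by
  rw [← SimpleGraph.card_neighborFinset_eq_degree, nbrP1 a b hu, Finset.card_singleton]

noncomputable def L : Matrix (Fin (a + b + 2)) (Fin (a + b + 2)) ℝ :=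
  (doubleStar a b).lapMatrix ℝ

lemma row0 (x : Fin (a + b + 2) → ℝ) :
    (L a b *ᵥ x) (pv0 a b) = (a + 1) * x (pv0 a b) - x (pv1 a b) - ∑ w ∈ PS0 a b, x w := by
  rw [L, SimpleGraph.lapMatrix_mulVec_apply, deg0, nbr0,
    Finset.sum_insert (pv1_not_mem_PS0 a b)]
  push_cast; ring

lemma row1 (x : Fin (a + b + 2) → ℝ) :
    (L a b *ᵥ x) (pv1 a b) = (b + 1) * x (pv1 a b) - x (pv0 a b) - ∑ w ∈ PS1 a b, x w := by
  rw [L, SimpleGraph.lapMatrix_mulVec_apply, deg1, nbr1,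
    Finset.sum_insert (pv0_not_mem_PS1 a b)]
  push_cast; ring

lemma rowP0 (x : Fin (a + b + 2) → ℝ) {u : Fin (a + b + 2)} (hu : u ∈ PS0 a b) :
    (L a b *ᵥ x) u = x u - x (pv0 a b) := by
  rw [L, SimpleGraph.lapMatrix_mulVec_apply, degP0 a b hu, nbrP0 a b hu,
    Finset.sum_singleton]
  push_cast; ring

lemma rowP1 (x : Fin (a + b + 2) → ℝ) {u : Fin (a + b + 2)} (hu : u ∈ PS1 a b) :
    (L a b *ᵥ x) u = x u - x (pv1 a b) := by
  rw [L, SimpleGraph.lapMatrix_mulVec_apply, degP1 a b hu, nbrP1 a b hu,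
    Finset.sum_singleton]
  push_cast; ring

end DSaux

namespace DSaux

open Module

variable (a b : ℕ)

lemma vertex_cases (u : Fin (a + b + 2)) :
    u = pv0 a b ∨ u = pv1 a b ∨ u ∈ PS0 a b ∨ u ∈ PS1 a b := by
  simp only [Fin.ext_iff, PS0, PS1, pv0, pv1, Finset.mem_filter, Finset.mem_univ, true_and]
  omega

lemma sum_PS0_eq (x : Fin (a + b + 2) → ℝ) (c : ℝ) (h : ∀ u ∈ PS0 a b, x u = c) :
    ∑ w ∈ PS0 a b, x w = a * c := by
  rw [Finset.sum_congr rfl h, Finset.sum_const, card_PS0, nsmul_eq_mul]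

lemma sum_PS1_eq (x : Fin (a + b + 2) → ℝ) (c : ℝ) (h : ∀ u ∈ PS1 a b, x u = c) :
    ∑ w ∈ PS1 a b, x w = b * c := by
  rw [Finset.sum_congr rfl h, Finset.sum_const, card_PS1, nsmul_eq_mul]

lemma E0_eq : LinearMap.ker (L a b).mulVecLin
    = Submodule.span ℝ {(fun _ => (1:ℝ) : Fin (a + b + 2) → ℝ)} := by
  apply le_antisymm
  · intro x hx
    rw [LinearMap.mem_ker] at hx
    have hx' : ∀ u, (L a b *ᵥ x) u = 0 := fun u => by
      rw [show L a b *ᵥ x = (L a b).mulVecLin x from rfl, hx]; rfl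
    have hP0 : ∀ u ∈ PS0 a b, x u = x (pv0 a b) := by
      intro u hu
      have := hx' u
      rw [rowP0 a b x hu] at this
      linarith
    have hS0 := sum_PS0_eq a b x (x (pv0 a b)) hP0
    have h0 := hx' (pv0 a b)
    rw [row0, hS0] at h0
    have h01 : x (pv1 a b) = x (pv0 a b) := by linarith
    have hP1 : ∀ u ∈ PS1 a b, x u = x (pv0 a b) := by
      intro u hu
      have := hx' u
      rw [rowP1 a b x hu] at this
      linarith
    have hxc : x = x (pv0 a b) • (fun _ => (1:ℝ)) := by
      funext u
      rcases vertex_cases a b u with rfl | rfl | h | h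
      · simp
      · simp [h01]
      · simp [hP0 u h]
      · simp [hP1 u h]
    rw [hxc]
    exact Submodule.smul_mem _ _ (Submodule.mem_span_singleton_self _)
  · rw [Submodule.span_le, Set.singleton_subset_iff]
    show (L a b).mulVecLin (fun _ => (1:ℝ)) = 0
    rw [Matrix.mulVecLin_apply, L]
    exact SimpleGraph.lapMatrix_mulVec_const_eq_zero (R := ℝ) (G := doubleStar a b)

lemma finrank_E0 : finrank ℝ (LinearMap.ker (L a b).mulVecLin) = 1 := by
  rw [E0_eq]
  exact finrank_span_singleton (by
    intro h
    have := congrFun h (pv0 a b)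
    simp at this)

noncomputable def Phi : (Fin (a + b + 2) → ℝ) →ₗ[ℝ] (Fin 4 → ℝ) :=
  LinearMap.pi (fun j => ![LinearMap.proj (pv0 a b), LinearMap.proj (pv1 a b),
    ∑ w ∈ PS0 a b, LinearMap.proj w, ∑ w ∈ PS1 a b, LinearMap.proj w] j)

lemma Phi_apply (x : Fin (a + b + 2) → ℝ) :
    Phi a b x = ![x (pv0 a b), x (pv1 a b), ∑ w ∈ PS0 a b, x w, ∑ w ∈ PS1 a b, x w] := by
  funext j
  fin_cases j <;>
    simp [Phi, LinearMap.pi_apply, LinearMap.sum_apply, LinearMap.proj_apply]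

lemma Phi_surj (ha : 1 ≤ a) (hb : 1 ≤ b) : Function.Surjective (Phi a b) := by
  intro y
  set q0 : Fin (a + b + 2) := ⟨2, by omega⟩ with hq0
  set q1 : Fin (a + b + 2) := ⟨a + 2, by omega⟩ with hq1
  have hq0m : q0 ∈ PS0 a b := by
    simp only [PS0, Finset.mem_filter, Finset.mem_univ, true_and, hq0]
    omega
  have hq1m : q1 ∈ PS1 a b := by
    simp only [PS1, Finset.mem_filter, Finset.mem_univ, true_and, hq1]
    omega
  refine ⟨y 0 • (Pi.single (pv0 a b) 1 : Fin (a + b + 2) → ℝ)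
    + y 1 • (Pi.single (pv1 a b) 1 : Fin (a + b + 2) → ℝ)
    + y 2 • (Pi.single q0 1 : Fin (a + b + 2) → ℝ)
    + y 3 • (Pi.single q1 1 : Fin (a + b + 2) → ℝ), ?_⟩
  have h01 : pv0 a b ≠ pv1 a b := Fin.ne_of_val_ne (show (0:ℕ) ≠ 1 by omega)
  have h0q0 : pv0 a b ≠ q0 := Fin.ne_of_val_ne (show (0:ℕ) ≠ 2 by omega)
  have h0q1 : pv0 a b ≠ q1 := Fin.ne_of_val_ne (show (0:ℕ) ≠ a + 2 by omega)
  have h1q0 : pv1 a b ≠ q0 := Fin.ne_of_val_ne (show (1:ℕ) ≠ 2 by omega)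
  have h1q1 : pv1 a b ≠ q1 := Fin.ne_of_val_ne (show (1:ℕ) ≠ a + 2 by omega)
  have hq0q1 : q0 ≠ q1 := Fin.ne_of_val_ne (show (2:ℕ) ≠ a + 2 by omega)
  have hpv0P0 := pv1_not_mem_PS0 a b
  have hpv0nP0 : pv0 a b ∉ PS0 a b := by simp [PS0, pv0]
  have hpv1nP1 : pv1 a b ∉ PS1 a b := by simp [PS1, pv1]
  have hq1nP0 : q1 ∉ PS0 a b := by simp [PS0, hq1]
  have hq0nP1 : q0 ∉ PS1 a b := by simp [PS1, hq0]; omega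
  have hpv1nP0 : pv1 a b ∉ PS0 a b := pv1_not_mem_PS0 a b
  have hpv0nP1 : pv0 a b ∉ PS1 a b := pv0_not_mem_PS1 a b
  rw [map_add, map_add, map_add, _root_.map_smul, _root_.map_smul, _root_.map_smul, _root_.map_smul]
  funext j
  have hsingle : ∀ (p : Fin (a + b + 2)) (S : Finset (Fin (a + b + 2))),
      ∑ w ∈ S, (Pi.single p 1 : Fin (a + b + 2) → ℝ) w = if p ∈ S then 1 else 0 := by
    intro p S
    simp only [Pi.single_apply]
    exact Finset.sum_ite_eq' S p (fun _ => 1)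
  fin_cases j <;>
    simp [Phi_apply, hsingle, hq0m, hq1m, hpv0nP0, hpv1nP0, hpv0nP1, hpv1nP1, hq1nP0, hq0nP1,
      Pi.single_apply, h01, h01.symm, h0q0, h0q0.symm, h0q1, h0q1.symm, h1q0, h1q0.symm,
      h1q1, h1q1.symm, hq0q1, hq0q1.symm]

end DSaux

namespace DSaux

open Module

variable (a b : ℕ)

lemma mem_eigKer_iff' {m : ℕ} (A : Matrix (Fin m) (Fin m) ℝ) (t : ℝ) (v : Fin m → ℝ) :
    v ∈ LinearMap.ker (A - t • (1 : Matrix (Fin m) (Fin m) ℝ)).mulVecLin ↔ A *ᵥ v = t • v := by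
  rw [LinearMap.mem_ker, Matrix.mulVecLin_apply, Matrix.sub_mulVec, Matrix.smul_mulVec,
    Matrix.one_mulVec, sub_eq_zero]

lemma E1_eq (ha : 1 ≤ a) (hb : 1 ≤ b) :
    LinearMap.ker (L a b - (1:ℝ) • (1 : Matrix (Fin (a+b+2)) (Fin (a+b+2)) ℝ)).mulVecLin
      = LinearMap.ker (Phi a b) := by
  ext x
  rw [mem_eigKer_iff', LinearMap.mem_ker]
  set q0 : Fin (a + b + 2) := ⟨2, by omega⟩ with hq0
  set q1 : Fin (a + b + 2) := ⟨a + 2, by omega⟩ with hq1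
  have hq0m : q0 ∈ PS0 a b := by
    simp only [PS0, Finset.mem_filter, Finset.mem_univ, true_and, hq0]
    omega
  have hq1m : q1 ∈ PS1 a b := by
    simp only [PS1, Finset.mem_filter, Finset.mem_univ, true_and, hq1]
    omega
  constructor
  · intro hx
    have hx' : ∀ u, (L a b *ᵥ x) u = x u := fun u => by rw [hx]; simp
    have h00 : x (pv0 a b) = 0 := by
      have := hx' q0
      rw [rowP0 a b x hq0m] at this
      linarith
    have h10 : x (pv1 a b) = 0 := by
      have := hx' q1
      rw [rowP1 a b x hq1m] at this
      linarith
    have hS0 : ∑ w ∈ PS0 a b, x w = 0 := by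
      have := hx' (pv0 a b)
      rw [row0, h00, h10] at this
      linarith
    have hS1 : ∑ w ∈ PS1 a b, x w = 0 := by
      have := hx' (pv1 a b)
      rw [row1, h00, h10] at this
      linarith
    rw [Phi_apply]
    funext j
    fin_cases j <;> simp [h00, h10, hS0, hS1]
  · intro hx
    rw [Phi_apply] at hx
    have h00 : x (pv0 a b) = 0 := by simpa using congrFun hx 0
    have h10 : x (pv1 a b) = 0 := by simpa using congrFun hx 1
    have hS0 : ∑ w ∈ PS0 a b, x w = 0 := by simpa using congrFun hx 2
    have hS1 : ∑ w ∈ PS1 a b, x w = 0 := by simpa using congrFun hx 3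
    funext u
    have hgoal : ∀ u, ((1:ℝ) • x) u = x u := fun u => by simp
    rw [hgoal]
    rcases vertex_cases a b u with rfl | rfl | h | h
    · rw [row0, hS0, h00, h10]; ring
    · rw [row1, hS1, h00, h10]; ring
    · rw [rowP0 a b x h, h00]; ring
    · rw [rowP1 a b x h, h10]; ring

lemma finrank_E1 (ha : 1 ≤ a) (hb : 1 ≤ b) :
    finrank ℝ (LinearMap.ker
      (L a b - (1:ℝ) • (1 : Matrix (Fin (a+b+2)) (Fin (a+b+2)) ℝ)).mulVecLin) = a + b - 2 := by
  rw [E1_eq a b ha hb]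
  have h := LinearMap.finrank_range_add_finrank_ker (Phi a b)
  rw [LinearMap.range_eq_top.mpr (Phi_surj a b ha hb), finrank_top,
    Module.finrank_fintype_fun_eq_card, Module.finrank_fintype_fun_eq_card,
    Fintype.card_fin, Fintype.card_fin] at h
  omega

lemma cubic_root (ha : 1 ≤ a) (hb : 1 ≤ b) {t : ℝ} {x : Fin (a + b + 2) → ℝ}
    (hx : L a b *ᵥ x = t • x) (hx0 : x ≠ 0) (ht0 : t ≠ 0) (ht1 : t ≠ 1) :
    t^3 - ((a:ℝ)+(b:ℝ)+4)*t^2 + (2*((a:ℝ)+(b:ℝ)+2)+1+(a:ℝ)*(b:ℝ))*t - ((a:ℝ)+(b:ℝ)+2) = 0 := by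
  have hx' : ∀ u, (L a b *ᵥ x) u = t * x u := fun u => by rw [hx]; simp
  have hs : (1:ℝ) - t ≠ 0 := sub_ne_zero.mpr (Ne.symm ht1)
  set q0 : Fin (a + b + 2) := ⟨2, by omega⟩ with hq0
  set q1 : Fin (a + b + 2) := ⟨a + 2, by omega⟩ with hq1
  have hq0m : q0 ∈ PS0 a b := by
    simp only [PS0, Finset.mem_filter, Finset.mem_univ, true_and, hq0]
    omega
  have hq1m : q1 ∈ PS1 a b := by
    simp only [PS1, Finset.mem_filter, Finset.mem_univ, true_and, hq1]
    omega
  have hP0 : ∀ u ∈ PS0 a b, x u * (1 - t) = x (pv0 a b) := by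
    intro u hu
    have h := hx' u
    rw [rowP0 a b x hu] at h
    linear_combination h
  have hP1 : ∀ u ∈ PS1 a b, x u * (1 - t) = x (pv1 a b) := by
    intro u hu
    have h := hx' u
    rw [rowP1 a b x hu] at h
    linear_combination h
  have hS0 : (∑ w ∈ PS0 a b, x w) * (1 - t) = a * x (pv0 a b) := by
    rw [Finset.sum_mul, Finset.sum_congr rfl hP0, Finset.sum_const, card_PS0, nsmul_eq_mul]
  have hS1 : (∑ w ∈ PS1 a b, x w) * (1 - t) = b * x (pv1 a b) := by
    rw [Finset.sum_mul, Finset.sum_congr rfl hP1, Finset.sum_const, card_PS1, nsmul_eq_mul]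
  have h0 : ((a:ℝ) + 1) * x (pv0 a b) - x (pv1 a b) - ∑ w ∈ PS0 a b, x w = t * x (pv0 a b) := by
    have := hx' (pv0 a b); rwa [row0] at this
  have h1 : ((b:ℝ) + 1) * x (pv1 a b) - x (pv0 a b) - ∑ w ∈ PS1 a b, x w = t * x (pv1 a b) := by
    have := hx' (pv1 a b); rwa [row1] at this
  have hx00 : x (pv0 a b) ≠ 0 := by
    intro h00
    have hP0z : ∀ u ∈ PS0 a b, x u = 0 := fun u hu => by
      have := hP0 u hu; rw [h00] at this
      exact (mul_eq_zero.mp this).resolve_right hs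
    have hS0z : ∑ w ∈ PS0 a b, x w = 0 := Finset.sum_eq_zero hP0z
    have h10 : x (pv1 a b) = 0 := by rw [h00, hS0z] at h0; linarith
    have hP1z : ∀ u ∈ PS1 a b, x u = 0 := fun u hu => by
      have := hP1 u hu; rw [h10] at this
      exact (mul_eq_zero.mp this).resolve_right hs
    apply hx0
    funext u
    rcases vertex_cases a b u with rfl | rfl | h | h
    · exact h00
    · exact h10
    · exact hP0z u h
    · exact hP1z u h
  have hx10 : x (pv1 a b) ≠ 0 := by
    intro h10
    have hP1z : ∀ u ∈ PS1 a b, x u = 0 := fun u hu => by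
      have := hP1 u hu; rw [h10] at this
      exact (mul_eq_zero.mp this).resolve_right hs
    have hS1z : ∑ w ∈ PS1 a b, x w = 0 := Finset.sum_eq_zero hP1z
    have h00 : x (pv0 a b) = 0 := by rw [h10, hS1z] at h1; linarith
    exact hx00 h00
  have e0 : (t^2 - ((a:ℝ)+2)*t + 1) * x (pv0 a b) = (1 - t) * x (pv1 a b) := by
    linear_combination (1 - t) * h0 + hS0
  have e1 : (t^2 - ((b:ℝ)+2)*t + 1) * x (pv1 a b) = (1 - t) * x (pv0 a b) := by
    linear_combination (1 - t) * h1 + hS1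
  have key : (t^2 - ((a:ℝ)+2)*t + 1) * (t^2 - ((b:ℝ)+2)*t + 1) * (x (pv0 a b) * x (pv1 a b))
      = (1 - t)^2 * (x (pv0 a b) * x (pv1 a b)) := by
    linear_combination ((t^2 - ((b:ℝ)+2)*t + 1) * x (pv1 a b)) * e0 + ((1 - t) * x (pv1 a b)) * e1
  have key2 : (t^2 - ((a:ℝ)+2)*t + 1) * (t^2 - ((b:ℝ)+2)*t + 1) = (1 - t)^2 :=
    mul_right_cancel₀ (mul_ne_zero hx00 hx10) key
  have final : t * (t^3 - ((a:ℝ)+(b:ℝ)+4)*t^2 + (2*((a:ℝ)+(b:ℝ)+2)+1+(a:ℝ)*(b:ℝ))*t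
      - ((a:ℝ)+(b:ℝ)+2)) = 0 := by linear_combination key2
  exact (mul_eq_zero.mp final).resolve_left ht0

end DSaux

namespace DSaux

variable (a b : ℕ)

lemma sum_split (f : Fin (a + b + 2) → ℝ) :
    ∑ u, f u = f (pv0 a b) + f (pv1 a b) + (∑ u ∈ PS0 a b, f u) + ∑ u ∈ PS1 a b, f u := by
  have h1 : pv0 a b ∉ insert (pv1 a b) (PS0 a b ∪ PS1 a b) := by
    simp only [Finset.mem_insert, Finset.mem_union, PS0, PS1, Finset.mem_filter,
      Finset.mem_univ, true_and, Fin.ext_iff, pv0, pv1]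
    omega
  have h2 : pv1 a b ∉ PS0 a b ∪ PS1 a b := by
    simp only [Finset.mem_union, PS0, PS1, Finset.mem_filter,
      Finset.mem_univ, true_and, pv1]
    omega
  have h3 : Disjoint (PS0 a b) (PS1 a b) := by
    rw [Finset.disjoint_left]
    intro u hu1 hu2
    simp only [PS0, PS1, Finset.mem_filter, Finset.mem_univ, true_and] at hu1 hu2
    omega
  have huniv : (univ : Finset (Fin (a + b + 2)))
      = insert (pv0 a b) (insert (pv1 a b) (PS0 a b ∪ PS1 a b)) := by
    ext u
    simp only [Finset.mem_univ, true_iff, Finset.mem_insert, Finset.mem_union, PS0, PS1,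
      Finset.mem_filter, Finset.mem_univ, true_and, Fin.ext_iff, pv0, pv1]
    omega
  rw [huniv, Finset.sum_insert h1, Finset.sum_insert h2, Finset.sum_union h3]
  ring

lemma lap_diag (u : Fin (a + b + 2)) : L a b u u = ((doubleStar a b).degree u : ℝ) := by
  simp [L, SimpleGraph.lapMatrix, SimpleGraph.degMatrix, Matrix.sub_apply,
    Matrix.diagonal_apply_eq, SimpleGraph.adjMatrix_apply]

lemma lap_offdiag {u w : Fin (a + b + 2)} (h : u ≠ w) :
    L a b u w = if (doubleStar a b).Adj u w then (-1 : ℝ) else 0 := by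
  simp only [L, SimpleGraph.lapMatrix, SimpleGraph.degMatrix, Matrix.sub_apply,
    Matrix.diagonal_apply_ne _ h, SimpleGraph.adjMatrix_apply]
  split_ifs <;> ring

lemma trace_L : (L a b).trace = 2 * (a : ℝ) + 2 * (b : ℝ) + 2 := by
  rw [Matrix.trace]
  have : ∀ u, (L a b).diag u = ((doubleStar a b).degree u : ℝ) := fun u => lap_diag a b u
  rw [Finset.sum_congr rfl (fun u _ => this u),
    sum_split a b (fun u => ((doubleStar a b).degree u : ℝ)), deg0, deg1,
    sum_PS0_eq a b _ 1 (fun u hu => by rw [degP0 a b hu]; norm_num),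
    sum_PS1_eq a b _ 1 (fun u hu => by rw [degP1 a b hu]; norm_num)]
  push_cast
  ring

lemma row_sq (u : Fin (a + b + 2)) : ∑ w, (L a b u w)^2
    = ((doubleStar a b).degree u : ℝ)^2 + (doubleStar a b).degree u := by
  have hpt : ∀ w, (L a b u w)^2 = (if u = w then ((doubleStar a b).degree u : ℝ)^2 else 0)
      + (if (doubleStar a b).Adj u w then 1 else 0) := by
    intro w
    by_cases h : u = w
    · subst h
      rw [lap_diag]
      simp [SimpleGraph.irrefl]
    · rw [lap_offdiag a b h]
      by_cases h2 : (doubleStar a b).Adj u w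
      · rw [if_pos h2, if_neg h, if_pos h2]; ring
      · rw [if_neg h2, if_neg h, if_neg h2]; ring
  rw [Finset.sum_congr rfl (fun w _ => hpt w), Finset.sum_add_distrib]
  congr 1
  · rw [Finset.sum_ite_eq, if_pos (Finset.mem_univ u)]
  · rw [Finset.sum_boole]
    congr 1
    rw [← SimpleGraph.neighborFinset_eq_filter, SimpleGraph.card_neighborFinset_eq_degree]

lemma trace_L2 : (L a b * L a b).trace
    = ((a:ℝ)+1)^2 + ((b:ℝ)+1)^2 + ((a:ℝ)+1) + ((b:ℝ)+1) + 2*(a:ℝ) + 2*(b:ℝ) := by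
  have hsym : ∀ u w, L a b w u = L a b u w := by
    intro u w
    have h := SimpleGraph.isSymm_lapMatrix (doubleStar a b) (R := ℝ)
    calc L a b w u = (L a b)ᵀ u w := rfl
    _ = L a b u w := by rw [show (L a b)ᵀ = L a b from h]
  have hdiag : ∀ u, (L a b * L a b) u u = ∑ w, (L a b u w)^2 := by
    intro u
    rw [Matrix.mul_apply]
    exact Finset.sum_congr rfl (fun w _ => by rw [hsym u w, sq])
  rw [Matrix.trace]
  rw [Finset.sum_congr rfl (fun u _ => by rw [Matrix.diag_apply, hdiag u, row_sq])]
  rw [sum_split a b (fun u => ((doubleStar a b).degree u : ℝ)^2 + (doubleStar a b).degree u),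
    deg0, deg1,
    sum_PS0_eq a b _ 2 (fun u hu => by rw [degP0 a b hu]; norm_num),
    sum_PS1_eq a b _ 2 (fun u hu => by rw [degP1 a b hu]; norm_num)]
  push_cast
  ring

end DSaux

namespace DSaux

open Module

lemma master (a b : ℕ) (ha : 1 ≤ a) (hb : 1 ≤ b) :
    ∑ v, 1 / (lapEigsUnordered (doubleStar a b) v)^2
      = ((a:ℝ)+(b:ℝ)-2) + ((2*((a:ℝ)+(b:ℝ)+2)+1+(a:ℝ)*(b:ℝ))^2
          - 2*((a:ℝ)+(b:ℝ)+4)*((a:ℝ)+(b:ℝ)+2)) / ((a:ℝ)+(b:ℝ)+2)^2 := by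
  have hP := SimpleGraph.posSemidef_lapMatrix (R := ℝ) (G := doubleStar a b)
  set hH : ((doubleStar a b).lapMatrix ℝ).IsHermitian := hP.1 with hHdef
  set eig : Fin (a + b + 2) → ℝ := lapEigsUnordered (doubleStar a b) with heig
  have heig' : eig = hH.eigenvalues := rfl
  have hLrfl : (doubleStar a b).lapMatrix ℝ = L a b := rfl
  -- counting eigenvalue 0
  have cnt0 : (univ.filter (fun v => eig v = 0)).card = 1 := by
    rw [heig', SpecAux.eig_count hH 0]
    have h0 : (doubleStar a b).lapMatrix ℝ - (0:ℝ) • 1 = L a b := by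
      rw [hLrfl]; simp
    rw [h0, finrank_E0]
  -- counting eigenvalue 1
  have cnt1 : (univ.filter (fun v => eig v = 1)).card = a + b - 2 := by
    rw [heig', SpecAux.eig_count hH 1, hLrfl, finrank_E1 a b ha hb]
  -- all other eigenvalues are roots of the cubic
  have roots : ∀ v, eig v ≠ 0 → eig v ≠ 1 →
      (eig v)^3 - ((a:ℝ)+(b:ℝ)+4)*(eig v)^2
        + (2*((a:ℝ)+(b:ℝ)+2)+1+(a:ℝ)*(b:ℝ))*(eig v) - ((a:ℝ)+(b:ℝ)+2) = 0 := by
    intro v hv0 hv1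
    have hvec := hH.mulVec_eigenvectorBasis v
    have hnz : ⇑(hH.eigenvectorBasis v) ≠ (0 : Fin (a + b + 2) → ℝ) := by
      have h := hH.eigenvectorBasis.orthonormal.ne_zero v
      intro hc
      apply h
      apply (EuclideanSpace.basisFun (Fin (a+b+2)) ℝ).toBasis.ext_elem_iff.mpr
      intro i
      simpa using congrFun hc i
    exact cubic_root a b ha hb (by rw [← hLrfl]; rw [heig'] at *; exact hvec) hnz hv0 hv1
  -- trace identities
  have sum1 : ∑ v, eig v = 2*(a:ℝ) + 2*(b:ℝ) + 2 := by
    rw [heig', SpecAux.eig_sum hH, hLrfl, trace_L]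
  have sum2 : ∑ v, (eig v)^2
      = ((a:ℝ)+1)^2 + ((b:ℝ)+1)^2 + ((a:ℝ)+1) + ((b:ℝ)+1) + 2*(a:ℝ) + 2*(b:ℝ) := by
    rw [heig', SpecAux.eig_sq_sum hH, hLrfl, trace_L2]
  -- split universe
  set F0 : Finset (Fin (a+b+2)) := univ.filter (fun v => eig v = 0) with hF0
  set F1 : Finset (Fin (a+b+2)) := univ.filter (fun v => eig v = 1) with hF1
  set T : Finset (Fin (a+b+2)) := univ.filter (fun v => eig v ≠ 0 ∧ eig v ≠ 1) with hT
  have hd01 : Disjoint F0 F1 := by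
    rw [Finset.disjoint_left]
    intro u h1 h2
    rw [hF0, Finset.mem_filter] at h1
    rw [hF1, Finset.mem_filter] at h2
    rw [h1.2] at h2
    norm_num at h2
  have hd0T : Disjoint F0 T := by
    rw [Finset.disjoint_left]
    intro u h1 h2
    rw [hF0, Finset.mem_filter] at h1
    rw [hT, Finset.mem_filter] at h2
    exact h2.2.1 h1.2
  have hd1T : Disjoint F1 T := by
    rw [Finset.disjoint_left]
    intro u h1 h2
    rw [hF1, Finset.mem_filter] at h1
    rw [hT, Finset.mem_filter] at h2
    exact h2.2.2 h1.2
  have huniv : (univ : Finset (Fin (a+b+2))) = (F0 ∪ F1) ∪ T := by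
    ext u
    simp only [Finset.mem_univ, true_iff, Finset.mem_union, hF0, hF1, hT, Finset.mem_filter,
      Finset.mem_univ, true_and]
    tauto
  have hsplit : ∀ g : Fin (a+b+2) → ℝ,
      ∑ v, g v = (∑ v ∈ F0, g v) + (∑ v ∈ F1, g v) + ∑ v ∈ T, g v := by
    intro g
    rw [huniv, Finset.sum_union (by
      rw [Finset.disjoint_union_left]; exact ⟨hd0T, hd1T⟩),
      Finset.sum_union hd01]
  have cardT : T.card = 3 := by
    have hcard : Fintype.card (Fin (a+b+2)) = ((F0 ∪ F1) ∪ T).card := by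
      rw [← huniv, Finset.card_univ]
    rw [Finset.card_union_of_disjoint (by
      rw [Finset.disjoint_union_left]; exact ⟨hd0T, hd1T⟩),
      Finset.card_union_of_disjoint hd01, cnt0, cnt1, Fintype.card_fin] at hcard
    omega
  obtain ⟨i, j, k, hij, hik, hjk, hTeq⟩ := Finset.card_eq_three.mp cardT
  have hmemi : i ∈ T := by rw [hTeq]; simp
  have hmemj : j ∈ T := by rw [hTeq]; simp
  have hmemk : k ∈ T := by rw [hTeq]; simp
  have hsumT : ∀ g : Fin (a+b+2) → ℝ, ∑ v ∈ T, g v = g i + g j + g k := by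
    intro g
    rw [hTeq, Finset.sum_insert (by simp [hij, hik]), Finset.sum_insert (by simp [hjk]),
      Finset.sum_singleton, add_assoc]
  set x := eig i
  set y := eig j
  set z := eig k
  have hxprop : x ≠ 0 ∧ x ≠ 1 := by
    have := hmemi; rw [hT, Finset.mem_filter] at this; exact this.2
  have hyprop : y ≠ 0 ∧ y ≠ 1 := by
    have := hmemj; rw [hT, Finset.mem_filter] at this; exact this.2
  have hzprop : z ≠ 0 ∧ z ≠ 1 := by
    have := hmemk; rw [hT, Finset.mem_filter] at this; exact this.2
  have cx := roots i hxprop.1 hxprop.2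
  have cy := roots j hyprop.1 hyprop.2
  have cz := roots k hzprop.1 hzprop.2
  -- sums over F0 and F1
  have hsF0 : ∀ (g : ℝ → ℝ), (∑ v ∈ F0, g (eig v)) = (g 0) * 1 := by
    intro g
    rw [show (∑ v ∈ F0, g (eig v)) = ∑ v ∈ F0, g 0 from Finset.sum_congr rfl (fun v hv => by
      rw [hF0, Finset.mem_filter] at hv; rw [hv.2]), Finset.sum_const, cnt0]
    simp
  have hsF1 : ∀ (g : ℝ → ℝ), (∑ v ∈ F1, g (eig v)) = g 1 * ((a:ℝ)+(b:ℝ)-2) := by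
    intro g
    rw [show (∑ v ∈ F1, g (eig v)) = ∑ v ∈ F1, g 1 from Finset.sum_congr rfl (fun v hv => by
      rw [hF1, Finset.mem_filter] at hv; rw [hv.2]), Finset.sum_const, cnt1]
    rw [nsmul_eq_mul, Nat.cast_sub (by omega : 2 ≤ a + b)]
    push_cast
    ring
  have hab2 : ((a:ℝ)+(b:ℝ)+2) ≠ 0 := by positivity
  -- power sums of x, y, z
  have q1 : x + y + z = (a:ℝ)+(b:ℝ)+4 := by
    have := hsplit eig
    rw [sum1, hsF0 (fun w => w), hsF1 (fun w => w), hsumT eig] at this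
    linarith
  have q2 : x^2 + y^2 + z^2 = (a:ℝ)^2+(b:ℝ)^2+4*(a:ℝ)+4*(b:ℝ)+6 := by
    have := hsplit (fun v => (eig v)^2)
    rw [sum2, hsF0 (fun w => w^2), hsF1 (fun w => w^2), hsumT (fun v => (eig v)^2)] at this
    nlinarith [this]
  have e2 : x*y + y*z + z*x = (a:ℝ)*(b:ℝ) + 2*(a:ℝ) + 2*(b:ℝ) + 5 := by
    linear_combination ((x+y+z+((a:ℝ)+(b:ℝ)+4))/2) * q1 - (1/2) * q2
  have e3 : x*y*z = (a:ℝ)+(b:ℝ)+2 := by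
    linear_combination (1/3)*(cx+cy+cz) - ((x^2+y^2+z^2)/3)*q1 + ((x+y+z)/3)*e2
  -- final assembly
  have final : ∑ v, 1/(eig v)^2 = ((a:ℝ)+(b:ℝ)-2) + (1/x^2 + 1/y^2 + 1/z^2) := by
    rw [hsplit (fun v => 1/(eig v)^2), hsF0 (fun w => 1/w^2), hsF1 (fun w => 1/w^2),
      hsumT (fun v => 1/(eig v)^2)]
    norm_num
    rfl
  rw [final]
  have hW : 1/x^2 + 1/y^2 + 1/z^2
      = ((x*y+y*z+z*x)^2 - 2*(x+y+z)*(x*y*z))/(x*y*z)^2 := by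
    have hx0 := hxprop.1
    have hy0 := hyprop.1
    have hz0 := hzprop.1
    field_simp
    ring
  rw [hW, e2, e3, q1]
  congr 1
  congr 1
  push_cast
  ring

end DSaux

namespace DSaux

open Module

lemma cnt0 (a b : ℕ) :
    (univ.filter (fun v => lapEigsUnordered (doubleStar a b) v = 0)).card = 1 := by
  have hP := SimpleGraph.posSemidef_lapMatrix (R := ℝ) (G := doubleStar a b)
  rw [show lapEigsUnordered (doubleStar a b) = hP.1.eigenvalues from rfl,
    SpecAux.eig_count hP.1 0]
  have h0 : (doubleStar a b).lapMatrix ℝ - (0:ℝ) • 1 = L a b := by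
    rw [show (doubleStar a b).lapMatrix ℝ = L a b from rfl]; simp
  rw [h0, finrank_E0]

lemma eig_nonneg (a b : ℕ) (v : Fin (a + b + 2)) :
    0 ≤ lapEigsUnordered (doubleStar a b) v :=
  (SimpleGraph.posSemidef_lapMatrix (R := ℝ) (G := doubleStar a b)).eigenvalues_nonneg v

lemma mu_sum (a b : ℕ) (μ : Fin (a + b + 2) → ℝ) (hμ : IsLapEigSeq (doubleStar a b) μ) :
    ∑ i ∈ univ.filter (fun i : Fin (a + b + 2) => 0 < i.val), 1 / μ i ^ 2
      = ∑ v, 1 / (lapEigsUnordered (doubleStar a b) v) ^ 2 := by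
  obtain ⟨hmono, e, he⟩ := hμ
  have hnn : ∀ i, 0 ≤ μ i := fun i => by
    have h := he (e.symm i)
    rw [Equiv.apply_symm_apply] at h
    rw [← h]
    exact eig_nonneg a b _
  obtain ⟨v0, hv0mem⟩ := Finset.card_pos.mp (by rw [cnt0 a b]; omega :
    0 < (univ.filter (fun v => lapEigsUnordered (doubleStar a b) v = 0)).card)
  have hv0 : lapEigsUnordered (doubleStar a b) v0 = 0 := (Finset.mem_filter.mp hv0mem).2
  set i0 : Fin (a + b + 2) := ⟨0, by omega⟩ with hi0
  have hμ0 : μ i0 = 0 := by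
    have h1 : μ i0 ≤ μ (e v0) := hmono (by simp [Fin.le_def, hi0])
    rw [← he v0, hv0] at h1
    exact le_antisymm h1 (hnn i0)
  have hfilter : univ.filter (fun i : Fin (a + b + 2) => 0 < i.val) = univ.erase i0 := by
    ext u
    simp only [Finset.mem_filter, Finset.mem_univ, true_and, Finset.mem_erase, ne_eq,
      Fin.ext_iff, hi0, and_true]
    omega
  rw [hfilter, Finset.sum_erase_eq_sub (Finset.mem_univ i0), hμ0,
    show (1:ℝ)/(0:ℝ)^2 = 0 by norm_num, sub_zero]
  rw [← Equiv.sum_comp e (fun i => 1 / μ i ^ 2)]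
  exact Finset.sum_congr rfl (fun v _ => by rw [he v])

end DSaux

namespace DSaux

lemma nat_low (a b : ℕ) (ha : 1 ≤ a) (hb : 1 ≤ b) :
    a + b - 1 ≤ a * b ∧ (a * b = a + b - 1 ↔ a = 1 ∨ b = 1) := by
  obtain ⟨a', rfl⟩ := Nat.exists_eq_add_of_le ha
  obtain ⟨b', rfl⟩ := Nat.exists_eq_add_of_le hb
  have hkey : (1 + a') * (1 + b') = a' * b' + a' + b' + 1 := by ring
  have hczero : a' * b' = 0 ↔ a' = 0 ∨ b' = 0 := Nat.mul_eq_zero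
  constructor
  · omega
  · constructor
    · intro h
      have hc : a' * b' = 0 := by omega
      rcases hczero.mp hc with h' | h' <;> omega
    · intro h
      rcases h with h' | h'
      · have : a' = 0 := by omega
        subst this
        simp
      · have : b' = 0 := by omega
        subst this
        simp

lemma nat_up (a b : ℕ) :
    a * b ≤ ((a+b+1)/2) * ((a+b)/2) ∧
      (a * b = ((a+b+1)/2) * ((a+b)/2) ↔
        (a = (a+b+1)/2 ∧ b = (a+b)/2) ∨ (a = (a+b)/2 ∧ b = (a+b+1)/2)) := by
  set m1 := (a+b+1)/2 with hm1
  set m2 := (a+b)/2 with hm2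
  have hm : m1 + m2 = a + b ∧ (m1 = m2 ∨ m1 = m2 + 1) := by
    constructor <;> omega
  rcases hm.2 with hcase | hcase
  · -- even case : m1 = m2
    have hab : a + b = 2 * m2 := by omega
    have h1 : (a:ℤ) + b = 2*(m2:ℤ) := by exact_mod_cast hab
    have hz : ((a:ℤ) - b)^2 = 4*(m2:ℤ)*m2 - 4*((a:ℤ)*b) := by
      linear_combination ((a:ℤ) + b + 2*m2) * h1
    have h0 : (0:ℤ) ≤ ((a:ℤ) - b)^2 := sq_nonneg _
    have hleZ : (a:ℤ)*b ≤ (m2:ℤ)*m2 := by linarith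
    have hle : a * b ≤ m2 * m2 := by exact_mod_cast hleZ
    constructor
    · rw [hcase]; exact hle
    · constructor
      · intro h
        rw [hcase] at h
        have hZ : (a:ℤ)*b = (m2:ℤ)*m2 := by exact_mod_cast h
        have : ((a:ℤ) - b)^2 = 0 := by linarith
        have : (a:ℤ) - b = 0 := by
          exact pow_eq_zero_iff (by norm_num) |>.mp this
        have hab2 : (a:ℤ) = b := by linarith
        have hab' : a = b := by exact_mod_cast hab2
        exact Or.inl ⟨by omega, by omega⟩
      · intro h
        rcases h with ⟨h1', h2'⟩ | ⟨h1', h2'⟩ <;> rw [h1', h2'] <;> ring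
  · -- odd case : m1 = m2 + 1
    have hab : a + b = 2 * m2 + 1 := by omega
    have h1 : (a:ℤ) + b = 2*(m2:ℤ) + 1 := by exact_mod_cast hab
    have hz : ((a:ℤ) - b)^2 = 4*(m2:ℤ)*(m2+1) + 1 - 4*((a:ℤ)*b) := by
      linear_combination ((a:ℤ) + b + 2*m2 + 1) * h1
    have hne : a ≠ b := by omega
    have hd0 : ((a:ℤ) - b) ≠ 0 := sub_ne_zero.mpr (by exact_mod_cast hne)
    have habs : 1 ≤ |(a:ℤ) - b| := Int.one_le_abs hd0
    have h1le : 1 ≤ ((a:ℤ) - b)^2 := by nlinarith [sq_abs ((a:ℤ) - b), abs_nonneg ((a:ℤ) - b)]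
    have hleZ : (a:ℤ)*b ≤ (m2:ℤ)*(m2+1) := by linarith
    have hle : a * b ≤ m2 * (m2 + 1) := by exact_mod_cast hleZ
    constructor
    · rw [hcase, Nat.mul_comm (m2+1) m2]; exact hle
    · constructor
      · intro h
        rw [hcase] at h
        have hZ : (a:ℤ)*b = ((m2:ℤ)+1)*m2 := by exact_mod_cast h
        have hsq1 : ((a:ℤ) - b)^2 = 1 := by linarith
        have hfac : ((a:ℤ) - b - 1) * ((a:ℤ) - b + 1) = 0 := by linear_combination hsq1
        rcases mul_eq_zero.mp hfac with h' | h'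
        · have : (a:ℤ) = (b:ℤ) + 1 := by linarith
          have : a = b + 1 := by exact_mod_cast this
          omega
        · have : (b:ℤ) = (a:ℤ) + 1 := by linarith
          have : b = a + 1 := by exact_mod_cast this
          omega
      · intro h
        rcases h with ⟨h1', h2'⟩ | ⟨h1', h2'⟩ <;> rw [h1', h2'] <;> ring

end DSaux

set_option maxHeartbeats 1000000 in
theorem statement_9 {a b n : ℕ} (ha : 1 ≤ a) (hb : 1 ≤ b) (hn : n = a + b + 2)
    (μ : Fin (a + b + 2) → ℝ) (hμ : IsLapEigSeq (doubleStar a b) μ) :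
    ((n : ℝ) ^ 2 + 3 * (n : ℝ) + 4 / (n : ℝ) - 16 ≤ (n : ℝ) * ∑ i ∈ univ.filter (fun i : Fin (a + b + 2) => 0 < i.val), 1 / μ i ^ 2) ∧
    ((n : ℝ) * ∑ i ∈ univ.filter (fun i : Fin (a + b + 2) => 0 < i.val), 1 / μ i ^ 2 ≤ (n : ℝ) ^ 2 - 2 * (n : ℝ) + 4 * ((((n - 1) / 2 : ℕ) : ℝ) * (((n - 2) / 2 : ℕ) : ℝ)) + ((((n - 1) / 2 : ℕ) : ℝ) * (((n - 2) / 2 : ℕ) : ℝ) + 1) ^ 2 / (n : ℝ)) ∧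
    ((n : ℝ) * ∑ i ∈ univ.filter (fun i : Fin (a + b + 2) => 0 < i.val), 1 / μ i ^ 2 = (n : ℝ) ^ 2 + 3 * (n : ℝ) + 4 / (n : ℝ) - 16 ↔ (a = 1 ∧ b = n - 3) ∨ (a = n - 3 ∧ b = 1)) ∧
    ((n : ℝ) * ∑ i ∈ univ.filter (fun i : Fin (a + b + 2) => 0 < i.val), 1 / μ i ^ 2 = (n : ℝ) ^ 2 - 2 * (n : ℝ) + 4 * ((((n - 1) / 2 : ℕ) : ℝ) * (((n - 2) / 2 : ℕ) : ℝ)) + ((((n - 1) / 2 : ℕ) : ℝ) * (((n - 2) / 2 : ℕ) : ℝ) + 1) ^ 2 / (n : ℝ) ↔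
      (a = (n - 1) / 2 ∧ b = (n - 2) / 2) ∨ (a = (n - 2) / 2 ∧ b = (n - 1) / 2)) := by
  subst hn
  have hSUM := DSaux.mu_sum a b μ hμ
  have hmaster := DSaux.master a b ha hb
  have hcast : ((a + b + 2 : ℕ) : ℝ) = (a:ℝ) + (b:ℝ) + 2 := by push_cast; ring
  have hA1 : (1:ℝ) ≤ (a:ℝ) := by exact_mod_cast ha
  have hB1 : (1:ℝ) ≤ (b:ℝ) := by exact_mod_cast hb
  have hp : (0:ℝ) < (a:ℝ) + (b:ℝ) + 2 := by linarith
  have hpne : ((a:ℝ) + (b:ℝ) + 2) ≠ 0 := ne_of_gt hp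
  have hach : ((a + b + 2 : ℕ) : ℝ)
        * ∑ i ∈ univ.filter (fun i : Fin (a + b + 2) => 0 < i.val), 1 / μ i ^ 2
      = ((a:ℝ)+(b:ℝ)+2)^2 - 2*((a:ℝ)+(b:ℝ)+2) + 4*((a:ℝ)*(b:ℝ))
        + ((a:ℝ)*(b:ℝ)+1)^2/((a:ℝ)+(b:ℝ)+2) := by
    rw [hSUM, hmaster, hcast]
    field_simp
    ring
  have hS0 : (0:ℝ) ≤ (a:ℝ)*(b:ℝ) := by positivity
  -- natural number facts
  obtain ⟨hlow, hlowiff⟩ := DSaux.nat_low a b ha hb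
  obtain ⟨hup, hupiff⟩ := DSaux.nat_up a b
  set M : ℕ := ((a+b+1)/2) * ((a+b)/2) with hM
  -- real versions
  have hlowR : (a:ℝ) + (b:ℝ) - 1 ≤ (a:ℝ)*(b:ℝ) := by
    have h' : ((a + b - 1 : ℕ) : ℝ) ≤ ((a * b : ℕ) : ℝ) := Nat.cast_le.mpr hlow
    rw [Nat.cast_sub (by omega : 1 ≤ a + b)] at h'
    push_cast at h'
    linarith
  have hupR : (a:ℝ)*(b:ℝ) ≤ (M:ℝ) := by
    have h' : ((a * b : ℕ) : ℝ) ≤ ((M : ℕ) : ℝ) := Nat.cast_le.mpr hup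
    push_cast at h'
    linarith
  have hMnn : (0:ℝ) ≤ (M:ℝ) := by positivity
  -- rewrite the division terms
  have he1 : (a + b + 2 - 1) / 2 = (a + b + 1) / 2 := by omega
  have he2 : (a + b + 2 - 2) / 2 = (a + b) / 2 := by omega
  rw [he1, he2, hach]
  have hcastM : (((a+b+1)/2 : ℕ) : ℝ) * (((a+b)/2 : ℕ) : ℝ) = (M:ℝ) := by
    rw [hM]; push_cast; ring
  rw [hcastM, hcast]
  set S : ℝ := (a:ℝ)*(b:ℝ) with hSdef
  set p : ℝ := (a:ℝ)+(b:ℝ)+2 with hpdef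
  -- factorization identities
  have hfact1 : (p^2 - 2*p + 4*S + (S+1)^2/p) - (p^2 + 3*p + 4/p - 16)
      = (S - ((a:ℝ)+(b:ℝ)-1)) * (4 + (S + (a:ℝ)+(b:ℝ)+1)/p) := by
    field_simp
    ring
  have hfact2 : (p^2 - 2*p + 4*(M:ℝ) + ((M:ℝ)+1)^2/p) - (p^2 - 2*p + 4*S + (S+1)^2/p)
      = ((M:ℝ) - S) * (4 + (S + (M:ℝ) + 2)/p) := by
    field_simp
    ring
  have hpos1 : (0:ℝ) < 4 + (S + (a:ℝ)+(b:ℝ)+1)/p := by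
    have : (0:ℝ) ≤ (S + (a:ℝ)+(b:ℝ)+1)/p := div_nonneg (by linarith [hS0, hA1, hB1]) (le_of_lt hp)
    linarith
  have hpos2 : (0:ℝ) < 4 + (S + (M:ℝ) + 2)/p := by
    have : (0:ℝ) ≤ (S + (M:ℝ) + 2)/p := div_nonneg (by linarith [hS0, hMnn]) (le_of_lt hp)
    linarith
  have hgap1 : (0:ℝ) ≤ S - ((a:ℝ)+(b:ℝ)-1) := by rw [hSdef]; linarith
  have hgap2 : (0:ℝ) ≤ (M:ℝ) - S := by rw [hSdef]; linarith
  refine ⟨?_, ?_, ?_, ?_⟩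
  · nlinarith [mul_nonneg hgap1 (le_of_lt hpos1), hfact1]
  · nlinarith [mul_nonneg hgap2 (le_of_lt hpos2), hfact2]
  · constructor
    · intro h
      have h0 : (S - ((a:ℝ)+(b:ℝ)-1)) * (4 + (S + (a:ℝ)+(b:ℝ)+1)/p) = 0 := by
        rw [← hfact1, h]; ring
      have hSval : S = (a:ℝ)+(b:ℝ)-1 := by
        rcases mul_eq_zero.mp h0 with h' | h'
        · linarith [sub_eq_zero.mp h']
        · linarith
      have hnat : a * b = a + b - 1 := by
        have : ((a*b : ℕ):ℝ) = ((a + b - 1 : ℕ):ℝ) := by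
          rw [Nat.cast_sub (by omega : 1 ≤ a + b)]
          push_cast
          rw [hSdef] at hSval
          linarith
        exact_mod_cast this
      rcases hlowiff.mp hnat with h' | h'
      · exact Or.inl ⟨h', by omega⟩
      · exact Or.inr ⟨by omega, h'⟩
    · intro h
      have hnat : a * b = a + b - 1 := by
        rcases h with ⟨h1', h2'⟩ | ⟨h1', h2'⟩
        · apply hlowiff.mpr; exact Or.inl h1'
        · apply hlowiff.mpr; exact Or.inr h2'
      have hSval : S = (a:ℝ)+(b:ℝ)-1 := by
        rw [hSdef]
        have : ((a*b : ℕ):ℝ) = ((a + b - 1 : ℕ):ℝ) := by exact_mod_cast hnat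
        rw [Nat.cast_sub (by omega : 1 ≤ a + b)] at this
        push_cast at this
        linarith
      have : (S - ((a:ℝ)+(b:ℝ)-1)) * (4 + (S + (a:ℝ)+(b:ℝ)+1)/p) = 0 := by
        rw [hSval]; ring
      linarith [hfact1, this]
  · constructor
    · intro h
      have h0 : ((M:ℝ) - S) * (4 + (S + (M:ℝ) + 2)/p) = 0 := by
        rw [← hfact2, h]; ring
      have hSval : S = (M:ℝ) := by
        rcases mul_eq_zero.mp h0 with h' | h'
        · linarith [sub_eq_zero.mp h']
        · linarith
      have hnat : a * b = M := by
        have : ((a*b : ℕ):ℝ) = ((M : ℕ):ℝ) := by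
          push_cast
          rw [hSdef] at hSval
          linarith
        exact_mod_cast this
      rcases hupiff.mp hnat with h' | h'
      · exact Or.inl h'
      · exact Or.inr h'
    · intro h
      have hnat : a * b = M := hupiff.mpr h
      have hSval : S = (M:ℝ) := by
        rw [hSdef]
        have : ((a*b : ℕ):ℝ) = ((M : ℕ):ℝ) := by exact_mod_cast hnat
        push_cast at this
        linarith
      have : ((M:ℝ) - S) * (4 + (S + (M:ℝ) + 2)/p) = 0 := by
        rw [hSval]; ring
      linarith [hfact2, this]
end

section
/- Let F_{s,0,n−2s−1} be the firefly graph with s ≥ 1 triangles, no pendant paths of length 2, and n − 2s − 1 pendant edges, on n ≥ 7 vertices. Then the characteristic polynomial of its Laplacian matrix is x(x−n)(x−3)^s(x−1)^{n−s−2}, so BH(F_{s,0,n−2s−1}) = n² − (8/9)sn − 2n + 1/n. Consequently: if n is odd then 5n²/9 − 14n/9 + 1/n ≤ BH(F_{s,0,n−2s−1}) ≤ n² − 26n/9 + 1/n, with the upper bound attained exactly at s = 1 and the lower bound exactly at s = (n−1)/2; if n is even then 5n²/9 − 10n/9 + 1/n ≤ BH(F_{s,0,n−2s−1}) ≤ n²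 − 26n/9 + 1/n, with the upper bound attained exactly at s = 1 and the lower bound exactly at s = (n−2)/2. -/
open Finset Polynomial

/-- The firefly graph `F_{s,t,k}` on `2s + 2t + k + 1` vertices: vertex `0` is the common
vertex; for each `i` with `1 ≤ i ≤ s` the vertices `2i-1, 2i` together with `0` form a
triangle; for each `j` with `1 ≤ j ≤ t` the vertices `2s+2j-1, 2s+2j` form a pendant path
of length 2 attached at `0` (with `2s+2j-1` the middle vertex); and the `k` vertices
`2s+2t+1, …, 2s+2t+k` are pendant neighbours of `0`. -/
def firefly (s t k : ℕ) : SimpleGraph (Fin (2 * s + 2 * t + k + 1)) :=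
  SimpleGraph.fromRel (fun u v =>
    (u.val = 0 ∧ 1 ≤ v.val ∧
      (v.val ≤ 2 * s ∨ (2 * s < v.val ∧ v.val ≤ 2 * s + 2 * t ∧ Odd (v.val - 2 * s)) ∨
        2 * s + 2 * t < v.val)) ∨
    (Odd u.val ∧ u.val ≤ 2 * s ∧ v.val = u.val + 1) ∨
    (2 * s < u.val ∧ u.val ≤ 2 * s + 2 * t ∧ Odd (u.val - 2 * s) ∧ v.val = u.val + 1))

noncomputable instance (s t k : ℕ) : DecidableRel (firefly s t k).Adj :=
  Classical.decRel _


open Finset Polynomial Matrix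

section Helpers

variable {m R : Type*} [Fintype m] [DecidableEq m] [CommRing R]

lemma my_charpoly_conj (P B Q : Matrix m m R) (h : P * Q = 1) :
    (P * B * Q).charpoly = B.charpoly := by
  have hPQ : P.map (C : R →+* R[X]) * Q.map C = 1 := by
    rw [← Matrix.map_mul, h, Matrix.map_one _ (map_zero C) (map_one C)]
  have hmat : charmatrix (P * B * Q) = P.map C * charmatrix B * Q.map C := by
    unfold charmatrix
    rw [mul_sub, sub_mul]
    congr 1
    · rw [mul_assoc, (scalar_commute (X : R[X]) (fun r' => Commute.all _ _) (Q.map C)).eq,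
        ← mul_assoc, hPQ, one_mul]
    · simp [RingHom.mapMatrix_apply, Matrix.map_mul]
  rw [Matrix.charpoly, hmat, det_mul, det_mul, mul_comm, ← mul_assoc, ← det_mul,
    mul_eq_one_comm.mp hPQ, det_one, one_mul]
  rfl

lemma my_charpoly_diagonal (d : m → R) :
    (diagonal d).charpoly = ∏ i, (X - C (d i)) := by
  have : charmatrix (diagonal d) = diagonal (fun i => X - C (d i)) := by
    ext i j
    by_cases hij : i = j
    · subst hij; simp [charmatrix_apply, diagonal_apply_eq]
    · simp [charmatrix_apply, diagonal_apply_ne _ hij, hij]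
  rw [Matrix.charpoly, this, det_diagonal]

lemma my_charpoly_hermitian (A : Matrix m m ℝ) (hA : A.IsHermitian) :
    A.charpoly = ∏ i, (X - C (hA.eigenvalues i)) := by
  have hspec := hA.spectral_theorem
  have hU : (hA.eigenvectorUnitary : Matrix m m ℝ) * (star hA.eigenvectorUnitary : Matrix m m ℝ) = 1 :=
    Matrix.mem_unitaryGroup_iff.mp hA.eigenvectorUnitary.2
  have hdiag : diagonal (RCLike.ofReal ∘ hA.eigenvalues) = diagonal hA.eigenvalues := by
    simp [RCLike.ofReal_real_eq_id]
  calc A.charpoly = ((hA.eigenvectorUnitary : Matrix m m ℝ) * diagonal hA.eigenvalues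
      * (star hA.eigenvectorUnitary : Matrix m m ℝ)).charpoly := by rw [← hdiag, ← Unitary.conjStarAlgAut_apply (S := ℝ), ← hspec]
    _ = (diagonal hA.eigenvalues).charpoly := my_charpoly_conj _ _ _ hU
    _ = ∏ i, (X - C (hA.eigenvalues i)) := my_charpoly_diagonal _

end Helpers

namespace FF14

variable (s k : ℕ)

abbrev W := Unit ⊕ ((Fin 2 × Fin s) ⊕ Fin k)

def toFin : W s k → Fin (2*s+2*0+k+1)
  | .inl _ => ⟨0, by omega⟩
  | .inr (.inl (j, i)) => ⟨2*i.val+1+j.val, by have := i.isLt; have := j.isLt; omega⟩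
  | .inr (.inr p) => ⟨2*s+1+p.val, by have := p.isLt; omega⟩

lemma toFin_bij : Function.Bijective (toFin s k) := by
  constructor
  · rintro (⟨⟩|⟨⟨j,i⟩|p⟩) (⟨⟩|⟨⟨j',i'⟩|p'⟩) h <;>
      simp only [toFin, Fin.mk.injEq] at h <;>
      first
      | rfl
      | (exfalso; (try have := i.isLt); (try have := j.isLt); (try have := i'.isLt);
          (try have := j'.isLt); (try have := p.isLt); (try have := p'.isLt); omega)
      | (have := i.isLt; have := j.isLt; have := i'.isLt; have := j'.isLt;
         have hj : j = j' := by omega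
         have hi : i = i' := by omega
         subst hj; subst hi; rfl)
      | (have hp : p = p' := by omega
         subst hp; rfl)
  · intro v
    rcases Nat.lt_or_ge 0 v.val with h0 | h0
    · rcases Nat.lt_or_ge (2*s) v.val with h1 | h1
      · refine ⟨Sum.inr (Sum.inr ⟨v.val - 2*s - 1, by have := v.isLt; omega⟩), ?_⟩
        simp only [toFin]; apply Fin.ext; simp; omega
      · refine ⟨Sum.inr (Sum.inl (⟨(v.val - 1) % 2, Nat.mod_lt _ (by omega)⟩,
          ⟨(v.val - 1) / 2, by omega⟩)), ?_⟩
        simp only [toFin]; apply Fin.ext; simp; omega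
    · exact ⟨Sum.inl (), by simp only [toFin]; apply Fin.ext; simp; omega⟩

noncomputable def eqv : W s k ≃ Fin (2*s+2*0+k+1) := Equiv.ofBijective _ (toFin_bij s k)

@[simp] lemma eqv_apply (w : W s k) : eqv s k w = toFin s k w := rfl

lemma adj_iff (u v : Fin (2*s+2*0+k+1)) :
    (firefly s 0 k).Adj u v ↔ (u.val ≠ v.val ∧ (u.val = 0 ∨ v.val = 0 ∨
      (u.val % 2 = 1 ∧ u.val ≤ 2*s ∧ v.val = u.val+1) ∨
      (v.val % 2 = 1 ∧ v.val ≤ 2*s ∧ u.val = v.val+1))) := by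
  rw [firefly, SimpleGraph.fromRel_adj]
  have hne : u ≠ v ↔ u.val ≠ v.val := by
    constructor
    · intro h h'; exact h (Fin.ext h')
    · intro h h'; exact h (by rw [h'])
  rw [hne]
  simp only [Nat.odd_iff]
  omega

end FF14

namespace FF14

open Finset Polynomial Matrix

variable (s k : ℕ)

noncomputable def Mblk : Matrix (W s k) (W s k) ℝ :=
  fromBlocks (of fun _ _ => (2*s+k : ℝ)) (of fun _ _ => -1) (of fun _ _ => -1)
    (fromBlocks (blockDiagonal (fun _ : Fin s => !![2,-1;-1,2])) 0 0 1)

lemma lap_apply (u v : Fin (2*s+2*0+k+1)) :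
    (firefly s 0 k).lapMatrix ℝ u v =
      (if u = v then ((firefly s 0 k).degree u : ℝ) else 0) - (if (firefly s 0 k).Adj u v then 1 else 0) := by
  simp [SimpleGraph.lapMatrix, SimpleGraph.degMatrix, Matrix.diagonal]

lemma deg_cast (u : Fin (2*s+2*0+k+1)) :
    ((firefly s 0 k).degree u : ℝ) =
      ∑ w : W s k, (if (firefly s 0 k).Adj u (toFin s k w) then (1:ℝ) else 0) := by
  rw [SimpleGraph.degree_eq_sum_if_adj]
  exact (Equiv.sum_comp (eqv s k) (fun j => if (firefly s 0 k).Adj u j then (1:ℝ) else 0)).symm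

lemma deg_center : ((firefly s 0 k).degree (toFin s k (Sum.inl ())) : ℝ) = 2*s+k := by
  rw [deg_cast]
  rw [Fintype.sum_sum_type, Fintype.sum_sum_type]
  have h1 : ∀ x : Unit, (if (firefly s 0 k).Adj (toFin s k (Sum.inl ())) (toFin s k (Sum.inl x)) then (1:ℝ) else 0) = 0 := by
    intro x; rw [if_neg]; rw [adj_iff]; simp only [toFin, Fin.val_mk]; omega
  have h2 : ∀ x : Fin 2 × Fin s, (if (firefly s 0 k).Adj (toFin s k (Sum.inl ())) (toFin s k (Sum.inr (Sum.inl x))) then (1:ℝ) else 0) = 1 := by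
    rintro ⟨j, i⟩; rw [if_pos]; rw [adj_iff]; simp only [toFin, Fin.val_mk]; exact ⟨by omega, by tauto⟩
  have h3 : ∀ x : Fin k, (if (firefly s 0 k).Adj (toFin s k (Sum.inl ())) (toFin s k (Sum.inr (Sum.inr x))) then (1:ℝ) else 0) = 1 := by
    intro x; rw [if_pos]; rw [adj_iff]; simp only [toFin, Fin.val_mk]; exact ⟨by omega, by tauto⟩
  simp only [h1, h2, h3, Finset.sum_const, Finset.card_univ]
  simp [Fintype.card_prod]

lemma deg_tri (j : Fin 2) (i : Fin s) :
    ((firefly s 0 k).degree (toFin s k (Sum.inr (Sum.inl (j, i)))) : ℝ) = 2 := by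
  rw [deg_cast]
  rw [Fintype.sum_sum_type, Fintype.sum_sum_type]
  have hj := j.isLt; have hi := i.isLt
  have h1 : ∀ x : Unit, (if (firefly s 0 k).Adj (toFin s k (Sum.inr (Sum.inl (j,i)))) (toFin s k (Sum.inl x)) then (1:ℝ) else 0) = 1 := by
    intro x; rw [if_pos]; rw [adj_iff]; simp only [toFin, Fin.val_mk]; exact ⟨by omega, by tauto⟩
  have h2 : ∀ x : Fin 2 × Fin s, (if (firefly s 0 k).Adj (toFin s k (Sum.inr (Sum.inl (j,i)))) (toFin s k (Sum.inr (Sum.inl x))) then (1:ℝ) else 0)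
      = if x = (⟨1 - j.val, by omega⟩, i) then 1 else 0 := by
    rintro ⟨j', i'⟩
    have hj' := j'.isLt; have hi' := i'.isLt
    have key : (firefly s 0 k).Adj (toFin s k (Sum.inr (Sum.inl (j,i)))) (toFin s k (Sum.inr (Sum.inl (j',i'))))
        ↔ (j'.val = 1 - j.val ∧ i'.val = i.val) := by
      rw [adj_iff]; simp only [toFin, Fin.val_mk]; omega
    have keq : ((j',i') = ((⟨1 - j.val, by omega⟩ : Fin 2), i)) ↔ (j'.val = 1 - j.val ∧ i'.val = i.val) := by
      simp [Prod.ext_iff, Fin.ext_iff]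
    rw [if_congr (key.trans keq.symm) rfl rfl]
  have h3 : ∀ x : Fin k, (if (firefly s 0 k).Adj (toFin s k (Sum.inr (Sum.inl (j,i)))) (toFin s k (Sum.inr (Sum.inr x))) then (1:ℝ) else 0) = 0 := by
    intro x; have := x.isLt; rw [if_neg]; rw [adj_iff]; simp only [toFin, Fin.val_mk]; omega
  simp only [h1, h2, h3, Finset.sum_const, Finset.card_univ, Finset.sum_ite_eq']
  simp
  norm_num

lemma deg_pend (p : Fin k) :
    ((firefly s 0 k).degree (toFin s k (Sum.inr (Sum.inr p))) : ℝ) = 1 := by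
  rw [deg_cast]
  rw [Fintype.sum_sum_type, Fintype.sum_sum_type]
  have hp := p.isLt
  have h1 : ∀ x : Unit, (if (firefly s 0 k).Adj (toFin s k (Sum.inr (Sum.inr p))) (toFin s k (Sum.inl x)) then (1:ℝ) else 0) = 1 := by
    intro x; rw [if_pos]; rw [adj_iff]; simp only [toFin, Fin.val_mk]; exact ⟨by omega, by tauto⟩
  have h2 : ∀ x : Fin 2 × Fin s, (if (firefly s 0 k).Adj (toFin s k (Sum.inr (Sum.inr p))) (toFin s k (Sum.inr (Sum.inl x))) then (1:ℝ) else 0) = 0 := by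
    rintro ⟨j', i'⟩; have := j'.isLt; have := i'.isLt
    rw [if_neg]; rw [adj_iff]; simp only [toFin, Fin.val_mk]; omega
  have h3 : ∀ x : Fin k, (if (firefly s 0 k).Adj (toFin s k (Sum.inr (Sum.inr p))) (toFin s k (Sum.inr (Sum.inr x))) then (1:ℝ) else 0) = 0 := by
    intro x; have := x.isLt; rw [if_neg]; rw [adj_iff]; simp only [toFin, Fin.val_mk]; omega
  simp only [h1, h2, h3, Finset.sum_const, Finset.card_univ]
  simp

end FF14

namespace FF14

open Finset Matrix

variable (s k : ℕ)

lemma mblk_tri (j j' : Fin 2) (i i' : Fin s) :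
    Mblk s k (Sum.inr (Sum.inl (j,i))) (Sum.inr (Sum.inl (j',i'))) =
      if i = i' then (if j = j' then 2 else -1) else 0 := by
  simp only [Mblk, fromBlocks_apply₂₂, fromBlocks_apply₁₁, blockDiagonal_apply]
  by_cases hi : i = i'
  · subst hi; simp only [if_pos rfl]
    fin_cases j <;> fin_cases j' <;> simp
  · simp [hi]

lemma lap_eq : (firefly s 0 k).lapMatrix ℝ = (Mblk s k).submatrix (eqv s k).symm (eqv s k).symm := by
  ext a b
  obtain ⟨u, rfl⟩ := (eqv s k).surjective a
  obtain ⟨v, rfl⟩ := (eqv s k).surjective b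
  rw [Matrix.submatrix_apply, Equiv.symm_apply_apply, Equiv.symm_apply_apply, eqv_apply, eqv_apply,
    lap_apply]
  have hinj := (toFin_bij s k).1
  rcases u with ⟨⟩|⟨⟨j,i⟩|p⟩ <;> rcases v with ⟨⟩|⟨⟨j',i'⟩|q⟩
  · -- center center
    rw [if_pos rfl, if_neg (SimpleGraph.irrefl _), deg_center]
    simp [Mblk]
  · -- center tri
    have hj := j'.isLt; have hi := i'.isLt
    rw [if_neg (fun h => by simpa using hinj h),
      if_pos ((adj_iff s k _ _).mpr (by simp only [toFin, Fin.val_mk]; exact ⟨by omega, by tauto⟩))]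
    simp [Mblk]
  · -- center pend
    rw [if_neg (fun h => by simpa using hinj h),
      if_pos ((adj_iff s k _ _).mpr (by simp only [toFin, Fin.val_mk]; exact ⟨by omega, by tauto⟩))]
    simp [Mblk]
  · -- tri center
    have hj := j.isLt; have hi := i.isLt
    rw [if_neg (fun h => by simpa using hinj h),
      if_pos ((adj_iff s k _ _).mpr (by simp only [toFin, Fin.val_mk]; exact ⟨by omega, by tauto⟩))]
    simp [Mblk]
  · -- tri tri
    have hj := j.isLt; have hi := i.isLt; have hj' := j'.isLt; have hi' := i'.isLt
    have key : (firefly s 0 k).Adj (toFin s k (Sum.inr (Sum.inl (j,i)))) (toFin s k (Sum.inr (Sum.inl (j',i'))))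
        ↔ (j'.val = 1 - j.val ∧ i'.val = i.val) := by
      rw [adj_iff]; simp only [toFin, Fin.val_mk]; omega
    rw [mblk_tri]
    by_cases hpair : j = j' ∧ i = i'
    · obtain ⟨rfl, rfl⟩ := hpair
      rw [if_pos rfl, if_neg (SimpleGraph.irrefl _), deg_tri, if_pos rfl, if_pos rfl]
      norm_num
    · have hne : toFin s k (Sum.inr (Sum.inl (j,i))) ≠ toFin s k (Sum.inr (Sum.inl (j',i'))) := by
        intro h; have := hinj h; simp [Prod.ext_iff] at this; exact hpair ⟨this.1, this.2⟩
      rw [if_neg hne]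
      by_cases hc : (j'.val = 1 - j.val ∧ i'.val = i.val)
      · rw [if_pos (key.mpr hc), if_pos (Fin.ext hc.2.symm), if_neg (by
          intro h; subst h; omega)]
        norm_num
      · rw [if_neg (fun h => hc (key.mp h))]
        have : ¬(i = i' ∧ j = j') ∨ True := Or.inr trivial
        by_cases hi2 : i = i'
        · subst hi2
          rw [if_pos rfl]
          have hjj : ¬ j = j' := by intro h; exact hpair ⟨h, rfl⟩
          exfalso; exact hc (by omega)
        · rw [if_neg hi2]; norm_num
  · -- tri pend
    have hj := j.isLt; have hi := i.isLt; have hq := q.isLt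
    rw [if_neg (fun h => by simpa using hinj h),
      if_neg (by rw [adj_iff]; simp only [toFin, Fin.val_mk]; omega)]
    simp [Mblk]
  · -- pend center
    rw [if_neg (fun h => by simpa using hinj h),
      if_pos ((adj_iff s k _ _).mpr (by simp only [toFin, Fin.val_mk]; exact ⟨by omega, by tauto⟩))]
    simp [Mblk]
  · -- pend tri
    have hj := j'.isLt; have hi := i'.isLt; have hp := p.isLt
    rw [if_neg (fun h => by simpa using hinj h),
      if_neg (by rw [adj_iff]; simp only [toFin, Fin.val_mk]; omega)]
    simp [Mblk]
  · -- pend pend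
    by_cases hpq : p = q
    · subst hpq
      rw [if_pos rfl, if_neg (SimpleGraph.irrefl _), deg_pend]
      simp [Mblk, Matrix.one_apply]
    · have hp := p.isLt; have hq := q.isLt
      have hpq' : p.val ≠ q.val := fun h => hpq (Fin.ext h)
      rw [if_neg (fun h => hpq' (by simpa [Fin.ext_iff] using hinj h)),
        if_neg (by rw [adj_iff]; simp only [toFin, Fin.val_mk]; omega)]
      simp [Mblk, Matrix.one_apply, hpq]

end FF14

namespace FF14

open Matrix

set_option maxHeartbeats 1000000 in
lemma charpoly_Mblk (s k : ℕ) (hs : 1 ≤ s) :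
    (Mblk s k).charpoly =
      X * (X - C ((2*s+k+1 : ℕ) : ℝ)) * (X - C (3:ℝ)) ^ s * (X - 1) ^ (s + k - 1) := by
  classical
  set F := FractionRing (Polynomial ℝ)
  set φ : Polynomial ℝ →+* F := (algebraMap (Polynomial ℝ) F : _ →+* F) with hφ
  have hinj : Function.Injective φ := IsFractionRing.injective _ _
  apply hinj
  set x : F := φ X with hx
  have hCn : ∀ m : ℕ, φ (C ((m:ℝ))) = (m : F) := fun m => by
    rw [map_natCast (C : ℝ →+* ℝ[X]), map_natCast φ]
  have hC1 : φ (C (1:ℝ)) = 1 := by rw [_root_.map_one, _root_.map_one]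
  have hC0 : φ (C (0:ℝ)) = 0 := by rw [map_zero, map_zero]
  have hCm1 : φ (C (-1:ℝ)) = -1 := by rw [map_neg, map_neg, hC1]
  have hC2 : φ (C (2:ℝ)) = 2 := by
    rw [show (2:ℝ) = ((2:ℕ):ℝ) by norm_num, hCn]; norm_num
  have hC3 : φ (C (3:ℝ)) = 3 := by
    rw [show (3:ℝ) = ((3:ℕ):ℝ) by norm_num, hCn]; norm_num
  have h1 : x - 1 ≠ 0 := by
    have : x - 1 = φ (X - C 1) := by rw [map_sub, hC1, hx]
    rw [this]
    simp only [ne_eq, map_eq_zero_iff φ hinj]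
    exact X_sub_C_ne_zero 1
  have h3 : x - 3 ≠ 0 := by
    have : x - 3 = φ (X - C 3) := by rw [map_sub, hC3, hx]
    rw [this]
    simp only [ne_eq, map_eq_zero_iff φ hinj]
    exact X_sub_C_ne_zero 3
  set A1 : Matrix Unit Unit F := (fun _ _ => x - ((2*s+k : ℕ) : F)) with hA1
  set B1 : Matrix Unit ((Fin 2 × Fin s) ⊕ Fin k) F := (fun _ _ => 1) with hB1
  set C1 : Matrix ((Fin 2 × Fin s) ⊕ Fin k) Unit F := (fun _ _ => 1) with hC1m
  have hcm : (charmatrix (Mblk s k)).map φ =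
      fromBlocks A1 B1 C1
        (fromBlocks (blockDiagonal (fun _ : Fin s => !![x-2, 1; 1, x-2])) 0 0
          (diagonal (fun _ : Fin k => x - 1))) := by
    ext u v
    rw [Matrix.map_apply, charmatrix_apply, map_sub]
    rcases u with ⟨⟩|⟨⟨a,i⟩|p⟩ <;> rcases v with ⟨⟩|⟨⟨b,j⟩|q⟩
    · rw [diagonal_apply_eq, fromBlocks_apply₁₁]
      show φ X - φ (C (Mblk s k (Sum.inl ()) (Sum.inl ()))) = x - ((2*s+k:ℕ):F)
      rw [show Mblk s k (Sum.inl ()) (Sum.inl ()) = (((2*s+k:ℕ)):ℝ) by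
        simp only [Mblk, fromBlocks_apply₁₁, of_apply]; push_cast; ring, hCn, hx]
    · rw [diagonal_apply_ne _ (by simp), fromBlocks_apply₁₂]
      show φ 0 - φ (C (Mblk s k _ _)) = (1:F)
      rw [show Mblk s k (Sum.inl ()) (Sum.inr (Sum.inl (b,j))) = (-1:ℝ) from rfl, hCm1, map_zero]
      ring
    · rw [diagonal_apply_ne _ (by simp), fromBlocks_apply₁₂]
      show φ 0 - φ (C (Mblk s k _ _)) = (1:F)
      rw [show Mblk s k (Sum.inl ()) (Sum.inr (Sum.inr q)) = (-1:ℝ) from rfl, hCm1, map_zero]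
      ring
    · rw [diagonal_apply_ne _ (by simp), fromBlocks_apply₂₁]
      show φ 0 - φ (C (Mblk s k _ _)) = (1:F)
      rw [show Mblk s k (Sum.inr (Sum.inl (a,i))) (Sum.inl ()) = (-1:ℝ) from rfl, hCm1, map_zero]
      ring
    · rw [fromBlocks_apply₂₂, fromBlocks_apply₁₁]
      by_cases hij : i = j
      · subst hij
        by_cases hab : a = b
        · subst hab
          rw [diagonal_apply_eq]
          show φ X - φ (C (Mblk s k _ _)) = _
          rw [show Mblk s k (Sum.inr (Sum.inl (a,i))) (Sum.inr (Sum.inl (a,i))) = (2:ℝ) by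
            simp [Mblk, fromBlocks_apply₂₂, fromBlocks_apply₁₁, blockDiagonal_apply]
            fin_cases a <;> norm_num, hC2]
          rw [blockDiagonal_apply, if_pos rfl, hx]
          fin_cases a <;> norm_num
        · rw [diagonal_apply_ne _ (by simp [Prod.ext_iff, hab])]
          show φ 0 - φ (C (Mblk s k _ _)) = _
          rw [show Mblk s k (Sum.inr (Sum.inl (a,i))) (Sum.inr (Sum.inl (b,i))) = (-1:ℝ) by
            simp [Mblk, fromBlocks_apply₂₂, fromBlocks_apply₁₁, blockDiagonal_apply]
            fin_cases a <;> fin_cases b <;> first | (exfalso; exact hab (by rfl)) | norm_num, hCm1]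
          rw [blockDiagonal_apply, if_pos rfl, map_zero]
          fin_cases a <;> fin_cases b <;> first | (exfalso; exact hab (by rfl)) | norm_num
      · rw [diagonal_apply_ne _ (by simp [Prod.ext_iff, hij])]
        show φ 0 - φ (C (Mblk s k _ _)) = _
        rw [show Mblk s k (Sum.inr (Sum.inl (a,i))) (Sum.inr (Sum.inl (b,j))) = (0:ℝ) by
          simp [Mblk, fromBlocks_apply₂₂, fromBlocks_apply₁₁, blockDiagonal_apply, hij], hC0]
        rw [blockDiagonal_apply, if_neg hij, map_zero]
        ring
    · rw [diagonal_apply_ne _ (by simp), fromBlocks_apply₂₂, fromBlocks_apply₁₂]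
      show φ 0 - φ (C (Mblk s k _ _)) = _
      rw [show Mblk s k (Sum.inr (Sum.inl (a,i))) (Sum.inr (Sum.inr q)) = (0:ℝ) from rfl, hC0, map_zero]
      simp
    · rw [diagonal_apply_ne _ (by simp), fromBlocks_apply₂₁]
      show φ 0 - φ (C (Mblk s k _ _)) = (1:F)
      rw [show Mblk s k (Sum.inr (Sum.inr p)) (Sum.inl ()) = (-1:ℝ) from rfl, hCm1, map_zero]
      ring
    · rw [diagonal_apply_ne _ (by simp), fromBlocks_apply₂₂, fromBlocks_apply₂₁]
      show φ 0 - φ (C (Mblk s k _ _)) = _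
      rw [show Mblk s k (Sum.inr (Sum.inr p)) (Sum.inr (Sum.inl (b,j))) = (0:ℝ) from rfl, hC0, map_zero]
      simp
    · rw [fromBlocks_apply₂₂, fromBlocks_apply₂₂]
      by_cases hpq : p = q
      · subst hpq
        rw [diagonal_apply_eq, diagonal_apply_eq]
        show φ X - φ (C (Mblk s k _ _)) = x - 1
        rw [show Mblk s k (Sum.inr (Sum.inr p)) (Sum.inr (Sum.inr p)) = (1:ℝ) by
          simp [Mblk, fromBlocks_apply₂₂, Matrix.one_apply], hC1, hx]
      · rw [diagonal_apply_ne _ (by simp [hpq]), diagonal_apply_ne _ hpq]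
        show φ 0 - φ (C (Mblk s k _ _)) = 0
        rw [show Mblk s k (Sum.inr (Sum.inr p)) (Sum.inr (Sum.inr q)) = (0:ℝ) by
          simp [Mblk, fromBlocks_apply₂₂, Matrix.one_apply, hpq], hC0, map_zero]
        ring
  set c : F := ((x-1)*(x-3))⁻¹ with hc
  set g : Matrix (Fin 2) (Fin 2) F := !![x-2, 1; 1, x-2] with hg
  set e2 : Matrix (Fin 2) (Fin 2) F := c • !![x-2, -1; -1, x-2] with he2
  set D2 : Matrix ((Fin 2 × Fin s) ⊕ Fin k) ((Fin 2 × Fin s) ⊕ Fin k) F :=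
    fromBlocks (blockDiagonal (fun _ : Fin s => g)) 0 0 (diagonal (fun _ : Fin k => x - 1)) with hD2
  set E2 : Matrix ((Fin 2 × Fin s) ⊕ Fin k) ((Fin 2 × Fin s) ⊕ Fin k) F :=
    fromBlocks (blockDiagonal (fun _ : Fin s => e2)) 0 0 (diagonal (fun _ : Fin k => (x - 1)⁻¹)) with hE2
  have hge : g * e2 = 1 := by
    rw [hg, he2, mul_smul_comm, Matrix.mul_fin_two]
    have hd : (x-2)*(x-2) + 1*(-1) = (x-1)*(x-3) := by ring
    have hz1 : (x-2)*(-1) + 1*(x-2) = (0:F) := by ring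
    have hz2 : 1*(x-2) + (x-2)*(-1) = (0:F) := by ring
    have hd2 : 1*(-1) + (x-2)*(x-2) = (x-1)*(x-3) := by ring
    rw [hd, hz1, hz2, hd2]
    ext a b
    fin_cases a <;> fin_cases b <;>
      simp [Matrix.smul_apply, Matrix.one_apply, hc, inv_mul_cancel₀ (G₀ := F) (mul_ne_zero (M₀ := F) h1 h3)] <;>
      (rw [← _root_.mul_inv_rev (G := F) (x-1) (x-3), inv_mul_cancel₀ (G₀ := F) (mul_ne_zero (M₀ := F) h1 h3)])
  have h11 : (blockDiagonal (fun _ : Fin s => g)) * (blockDiagonal (fun _ : Fin s => e2)) = 1 := by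
    rw [← blockDiagonal_mul]
    have hgg : (fun (_ : Fin s) => g * e2) = (fun _ => (1 : Matrix (Fin 2) (Fin 2) F)) :=
      funext fun _ => hge
    rw [hgg]; exact blockDiagonal_one
  have h22 : (diagonal (fun _ : Fin k => x - 1)) * (diagonal (fun _ : Fin k => (x-1)⁻¹)) = 1 := by
    rw [diagonal_mul_diagonal]
    have hdd : (fun (_ : Fin k) => (x-1) * (x-1)⁻¹) = (fun _ => (1:F)) :=
      funext fun _ => mul_inv_cancel₀ (G₀ := F) h1
    rw [hdd]; exact diagonal_one
  have hDE : D2 * E2 = 1 := by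
    rw [hD2, hE2, fromBlocks_multiply]
    rw [h11, h22]
    simp only [Matrix.mul_zero, Matrix.zero_mul, add_zero, zero_add]
    exact fromBlocks_one
  letI : Invertible D2 := invertibleOfRightInverse _ _ hDE
  have hinvD : ⅟D2 = E2 := invOf_eq_right_inv hDE
  -- sum of entries of E2
  have hblkcol : ∀ (b : Fin 2) (j : Fin s),
      (∑ y' : Fin 2 × Fin s, blockDiagonal (fun _ : Fin s => e2) y' (b,j)) = ∑ a : Fin 2, e2 a b := by
    intro b j
    rw [Fintype.sum_prod_type]
    simp [blockDiagonal_apply, Finset.sum_ite_eq, Finset.sum_ite_eq']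
  have hesum : ∀ b : Fin 2, (∑ a : Fin 2, e2 a b) = c * (x - 3) := by
    intro b
    rw [Fin.sum_univ_two]
    fin_cases b <;> simp [he2, Matrix.smul_apply] <;> ring
  have hblkSum : (∑ y : Fin 2 × Fin s, ∑ y' : Fin 2 × Fin s,
      blockDiagonal (fun _ : Fin s => e2) y' y) = (s:F) * (2 * (c * (x-3))) := by
    rw [Fintype.sum_prod_type]
    simp only [hblkcol, hesum]
    rw [Fin.sum_univ_two]
    simp [Finset.sum_const, card_univ, Fintype.card_fin, nsmul_eq_mul]
    ring
  have hsum : (∑ w : (Fin 2 × Fin s) ⊕ Fin k, ∑ w' : (Fin 2 × Fin s) ⊕ Fin k, E2 w' w)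
      = (s:F) * (2 * (c * (x-3))) + (k:F) * (x-1)⁻¹ := by
    rw [Fintype.sum_sum_type]
    have hA : ∀ y : Fin 2 × Fin s, (∑ w' : (Fin 2 × Fin s) ⊕ Fin k, E2 w' (Sum.inl y))
        = ∑ y' : Fin 2 × Fin s, blockDiagonal (fun _ : Fin s => e2) y' y := by
      intro y
      rw [Fintype.sum_sum_type]
      simp [hE2, fromBlocks_apply₁₁, fromBlocks_apply₂₁]
    have hB : ∀ q : Fin k, (∑ w' : (Fin 2 × Fin s) ⊕ Fin k, E2 w' (Sum.inr q)) = (x-1)⁻¹ := by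
      intro q
      rw [Fintype.sum_sum_type]
      simp [hE2, fromBlocks_apply₁₂, fromBlocks_apply₂₂, diagonal_apply, Finset.sum_ite_eq,
        Finset.sum_ite_eq']
    simp only [hA, hB, Finset.sum_const, card_univ, Fintype.card_fin, nsmul_eq_mul]
    rw [hblkSum]
  -- Schur complement entry
  have hschur : (A1 - B1 * E2 * C1).det
      = (x - ((2*s+k : ℕ) : F)) - ((s:F) * (2 * (c * (x-3))) + (k:F) * (x-1)⁻¹) := by
    rw [Matrix.det_unique, Matrix.sub_apply]
    congr 1
    rw [← hsum]
    show ∑ j, (∑ i, B1 default i * E2 i j) * C1 j default = _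
    simp only [hB1, hC1m, one_mul, mul_one]
  -- main computation
  rw [Matrix.charpoly, RingHom.map_det, RingHom.mapMatrix_apply, hcm]
  rw [Matrix.det_fromBlocks₂₂]
  rw [hinvD]
  rw [show D2.det = ((blockDiagonal (fun _ : Fin s => g)).det * (diagonal (fun _ : Fin k => x - 1)).det) by
    rw [hD2, Matrix.det_fromBlocks_zero₁₂]]
  rw [Matrix.det_blockDiagonal, det_diagonal]
  rw [hschur]
  simp only [Finset.prod_const, card_univ, Fintype.card_fin]
  rw [hg, Matrix.det_fin_two_of]
  -- right-hand side
  rw [_root_.map_mul, _root_.map_mul, _root_.map_mul, map_pow, map_pow, map_sub, map_sub,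
    map_sub, hCn, hC3, _root_.map_one, ← hx]
  obtain ⟨m, hm⟩ : ∃ m, s + k = m + 1 := ⟨s+k-1, by omega⟩
  have hm' : s + k - 1 = m := by omega
  rw [hm']
  set bt : F := x - ((2*s+k : ℕ) : F) - ((s:F) * (2 * (c * (x-3))) + (k:F) * (x-1)⁻¹) with hbt
  have key : (x - 1) * bt = x * (x - ((2*s+k+1 : ℕ) : F)) := by
    rw [hbt, hc]
    have hinv : (x-1)*(x-1)⁻¹ = 1 := mul_inv_cancel₀ (G₀ := F) h1
    have e1 : ((x-1)*(x-3))⁻¹*(x-3) = (x-1)⁻¹ := by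
      rw [mul_inv, mul_assoc, inv_mul_cancel₀ (G₀ := F) h3, mul_one]
    rw [e1]
    push_cast
    have hc2 : ((2*s:ℕ):F) = 2*(s:F) := by rw [Nat.cast_mul (α := F), Nat.cast_ofNat]
    linear_combination (-(((2*s:ℕ):F)+k)) * hinv + (x-1)*(x-1)⁻¹ * hc2
  have hfac : ((x-2)*(x-2) - 1*1 : F) = (x-1)*(x-3) := by ring
  calc ((x-2)*(x-2) - 1*1 : F)^s * (x-1)^k * bt
      = ((x-1)*(x-3) : F)^s * (x-1)^k * bt := by rw [hfac]
    _ = ((x-1)^s * (x-1)^k) * ((x-3)^s * bt) := by rw [mul_pow]; ring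
    _ = ((x-1)^m * (x-1)) * ((x-3)^s * bt) := by rw [← pow_add, hm, pow_succ]
    _ = (x-1)^m * (x-3)^s * ((x-1) * bt) := by ring
    _ = (x-1)^m * (x-3)^s * (x * (x - ((2*s+k+1 : ℕ) : F))) := by rw [key]
    _ = x * (x - ((2*s+k+1 : ℕ) : F)) * (x - 3)^s * (x-1)^m := by ring

end FF14

set_option maxHeartbeats 1600000 in
theorem statement_14 {n s k : ℕ} (hn : 7 ≤ n) (hs : 1 ≤ s) (hk : n = 2 * s + k + 1)
    (μ : Fin (2 * s + 2 * 0 + k + 1) → ℝ) (hμ : IsLapEigSeq (firefly s 0 k) μ) :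
    ((firefly s 0 k).lapMatrix ℝ).charpoly =
      X * (X - C (n : ℝ)) * (X - C (3 : ℝ)) ^ s * (X - 1) ^ (n - s - 2) ∧
    (n : ℝ) * ∑ i ∈ univ.filter (fun i : Fin (2 * s + 2 * 0 + k + 1) => 0 < i.val), 1 / μ i ^ 2 = (n : ℝ) ^ 2 - (8 / 9) * (s : ℝ) * (n : ℝ) - 2 * (n : ℝ) + 1 / (n : ℝ) ∧
    (Odd n →
      (5 * (n : ℝ) ^ 2 / 9 - 14 * (n : ℝ) / 9 + 1 / (n : ℝ) ≤ (n : ℝ) * ∑ i ∈ univ.filter (fun i : Fin (2 * s + 2 * 0 + k + 1) => 0 < i.val), 1 / μ i ^ 2 ∧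
       (n : ℝ) * ∑ i ∈ univ.filter (fun i : Fin (2 * s + 2 * 0 + k + 1) => 0 < i.val), 1 / μ i ^ 2 ≤ (n : ℝ) ^ 2 - 26 * (n : ℝ) / 9 + 1 / (n : ℝ) ∧
       ((n : ℝ) * ∑ i ∈ univ.filter (fun i : Fin (2 * s + 2 * 0 + k + 1) => 0 < i.val), 1 / μ i ^ 2 = (n : ℝ) ^ 2 - 26 * (n : ℝ) / 9 + 1 / (n : ℝ) ↔ s = 1) ∧
       ((n : ℝ) * ∑ i ∈ univ.filter (fun i : Fin (2 * s + 2 * 0 + k + 1) => 0 < i.val), 1 / μ i ^ 2 = 5 * (n : ℝ) ^ 2 / 9 - 14 * (n : ℝ) / 9 + 1 / (n : ℝ) ↔ n = 2 * s + 1))) ∧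
    (Even n →
      (5 * (n : ℝ) ^ 2 / 9 - 10 * (n : ℝ) / 9 + 1 / (n : ℝ) ≤ (n : ℝ) * ∑ i ∈ univ.filter (fun i : Fin (2 * s + 2 * 0 + k + 1) => 0 < i.val), 1 / μ i ^ 2 ∧
       (n : ℝ) * ∑ i ∈ univ.filter (fun i : Fin (2 * s + 2 * 0 + k + 1) => 0 < i.val), 1 / μ i ^ 2 ≤ (n : ℝ) ^ 2 - 26 * (n : ℝ) / 9 + 1 / (n : ℝ) ∧
       ((n : ℝ) * ∑ i ∈ univ.filter (fun i : Fin (2 * s + 2 * 0 + k + 1) => 0 < i.val), 1 / μ i ^ 2 = (n : ℝ) ^ 2 - 26 * (n : ℝ) / 9 + 1 / (n : ℝ) ↔ s = 1) ∧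
       ((n : ℝ) * ∑ i ∈ univ.filter (fun i : Fin (2 * s + 2 * 0 + k + 1) => 0 < i.val), 1 / μ i ^ 2 = 5 * (n : ℝ) ^ 2 / 9 - 10 * (n : ℝ) / 9 + 1 / (n : ℝ) ↔ n = 2 * s + 2))) := by
  obtain ⟨hmono, e, he⟩ := hμ
  have hN : (7:ℝ) ≤ (n:ℝ) := by exact_mod_cast hn
  have hnn : (n:ℝ) ≠ 0 := by linarith
  have hS1 : (1:ℝ) ≤ (s:ℝ) := by exact_mod_cast hs
  have h2s : 2*(s:ℝ) + 1 ≤ (n:ℝ) := by exact_mod_cast (by omega : 2*s+1 ≤ n)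
  -- Part 1: characteristic polynomial
  have hlap : (firefly s 0 k).lapMatrix ℝ =
      Matrix.reindex (FF14.eqv s k) (FF14.eqv s k) (FF14.Mblk s k) := by
    rw [Matrix.reindex_apply]; exact FF14.lap_eq s k
  have hcp : ((firefly s 0 k).lapMatrix ℝ).charpoly =
      X * (X - C (n : ℝ)) * (X - C (3:ℝ)) ^ s * (X - 1) ^ (n - s - 2) := by
    rw [hlap, Matrix.charpoly_reindex, FF14.charpoly_Mblk s k hs]
    have h1 : (2*s+k+1 : ℕ) = n := by omega
    have h2 : s + k - 1 = n - s - 2 := by omega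
    rw [h1, h2]
  -- spectral theorem
  have hμprod : (∏ i : Fin (2*s+2*0+k+1), (X - C (μ i))) =
      X * (X - C (n : ℝ)) * (X - C (3:ℝ)) ^ s * (X - 1) ^ (n - s - 2) := by
    rw [← hcp, my_charpoly_hermitian _
      (SimpleGraph.posSemidef_lapMatrix (R := ℝ) (G := firefly s 0 k)).1,
      ← Equiv.prod_comp e (fun i => X - C (μ i))]
    refine Finset.prod_congr rfl (fun v _ => ?_)
    rw [← he v]
    rfl
  -- multiset of eigenvalues
  set Tm : Multiset ℝ :=
    (0:ℝ) ::ₘ ((n:ℝ) ::ₘ (Multiset.replicate s (3:ℝ) + Multiset.replicate (n-s-2) (1:ℝ)))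
    with hTmdef
  have hTmprod : (Tm.map (fun a => X - C a)).prod
      = X * (X - C (n : ℝ)) * (X - C (3:ℝ)) ^ s * (X - 1) ^ (n - s - 2) := by
    rw [hTmdef]
    simp only [Multiset.map_cons, Multiset.prod_cons, Multiset.map_add, Multiset.prod_add,
      Multiset.map_replicate, Multiset.prod_replicate]
    rw [map_zero (C : ℝ →+* ℝ[X]), sub_zero, map_one (C : ℝ →+* ℝ[X])]
    ring
  have hMT : (univ.val.map μ) = Tm := by
    have hbig : ((univ.val.map μ).map (fun a => X - C a)).prod
        = (Tm.map (fun a => X - C a)).prod := by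
      rw [Multiset.map_map, hTmprod, ← hμprod, Finset.prod_eq_multiset_prod]
      rfl
    have := congrArg Polynomial.roots hbig
    rwa [roots_multiset_prod_X_sub_C, roots_multiset_prod_X_sub_C] at this
  have hTnn : ∀ a ∈ Tm, (0:ℝ) ≤ a := by
    intro a ha
    rw [hTmdef] at ha
    rcases Multiset.mem_cons.mp ha with h | ha
    · simp [h]
    rcases Multiset.mem_cons.mp ha with h | ha
    · rw [h]; positivity
    rcases Multiset.mem_add.mp ha with h | h
    · rw [Multiset.eq_of_mem_replicate h]; norm_num
    · rw [Multiset.eq_of_mem_replicate h]; norm_num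
  have hμ0 : μ 0 = 0 := by
    have h0mem : (0:ℝ) ∈ Tm := Multiset.mem_cons_self _ _
    rw [← hMT] at h0mem
    obtain ⟨j, hj, hj0⟩ := Multiset.mem_map.mp h0mem
    have hle : μ 0 ≤ μ j := hmono (Fin.zero_le j)
    have hmem0 : μ 0 ∈ Tm := by
      rw [← hMT]
      exact Multiset.mem_map_of_mem μ (Finset.mem_val.mpr (Finset.mem_univ 0))
    have := hTnn _ hmem0
    linarith [hj0 ▸ hle]
  have hfil : (univ.filter (fun i : Fin (2*s+2*0+k+1) => 0 < i.val))
      = univ.erase 0 := by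
    ext i
    simp only [mem_filter, mem_univ, true_and, mem_erase, and_true]
    constructor
    · intro h h0; rw [h0] at h; simp at h
    · intro h
      by_contra hc
      push_neg at hc
      exact h (Fin.ext (by simp only [Fin.val_zero]; omega))
  have hsum_univ : (∑ i : Fin (2*s+2*0+k+1), 1/μ i^2)
      = 1/(n:ℝ)^2 + (s:ℝ)/9 + ((n-s-2 : ℕ):ℝ) := by
    rw [Finset.sum_eq_multiset_sum]
    rw [show Multiset.map (fun i => 1/μ i^2) univ.val = Tm.map (fun a => 1/a^2) from by
      rw [← hMT, Multiset.map_map]; rfl]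
    rw [hTmdef]
    simp only [Multiset.map_cons, Multiset.sum_cons, Multiset.map_add, Multiset.sum_add,
      Multiset.map_replicate, Multiset.sum_replicate, nsmul_eq_mul]
    norm_num
    ring
  have hcast : ((n - s - 2 : ℕ):ℝ) = (n:ℝ) - (s:ℝ) - 2 := by
    rw [Nat.cast_sub (by omega), Nat.cast_sub (by omega)]
    norm_num
  have hS : (∑ i ∈ univ.filter (fun i : Fin (2*s+2*0+k+1) => 0 < i.val), 1/μ i^2)
      = 1/(n:ℝ)^2 + (s:ℝ)/9 + ((n:ℝ) - (s:ℝ) - 2) := by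
    rw [hfil, Finset.sum_erase_eq_sub (Finset.mem_univ _), hsum_univ, hμ0, hcast]
    norm_num
  have hmain : (n:ℝ) * (∑ i ∈ univ.filter (fun i : Fin (2*s+2*0+k+1) => 0 < i.val), 1/μ i^2)
      = (n:ℝ)^2 - (8/9)*(s:ℝ)*(n:ℝ) - 2*(n:ℝ) + 1/(n:ℝ) := by
    rw [hS]
    field_simp
    ring
  refine ⟨hcp, hmain, ?_, ?_⟩
  · intro _
    refine ⟨?_, ?_, ?_, ?_⟩
    · rw [hmain]; nlinarith [mul_nonneg (by linarith : (0:ℝ) ≤ (n:ℝ))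
        (by linarith : (0:ℝ) ≤ (n:ℝ) - 2*(s:ℝ) - 1)]
    · rw [hmain]; nlinarith [mul_nonneg (by linarith : (0:ℝ) ≤ (n:ℝ))
        (by linarith : (0:ℝ) ≤ (s:ℝ) - 1)]
    · rw [hmain]
      constructor
      · intro hEq
        have hz : ((s:ℝ) - 1) * ((8/9)*(n:ℝ)) = 0 := by linear_combination -hEq
        rcases mul_eq_zero.mp hz with h | h
        · have : (s:ℝ) = 1 := by linarith
          exact_mod_cast this
        · linarith
      · intro h
        subst h
        push_cast
        ring
    · rw [hmain]
      constructor
      · intro hEq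
        have hz : ((n:ℝ) - (2*(s:ℝ)+1)) * ((4/9)*(n:ℝ)) = 0 := by linear_combination hEq
        rcases mul_eq_zero.mp hz with h | h
        · have : (n:ℝ) = 2*(s:ℝ)+1 := by linarith
          exact_mod_cast this
        · linarith
      · intro h
        subst h
        push_cast
        ring
  · intro heven
    have h2s2 : 2*(s:ℝ) + 2 ≤ (n:ℝ) := by
      have : 2*s+2 ≤ n := by
        rcases heven with ⟨t, ht⟩
        omega
      exact_mod_cast this
    refine ⟨?_, ?_, ?_, ?_⟩
    · rw [hmain]; nlinarith [mul_nonneg (by linarith : (0:ℝ) ≤ (n:ℝ))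
        (by linarith : (0:ℝ) ≤ (n:ℝ) - 2*(s:ℝ) - 2)]
    · rw [hmain]; nlinarith [mul_nonneg (by linarith : (0:ℝ) ≤ (n:ℝ))
        (by linarith : (0:ℝ) ≤ (s:ℝ) - 1)]
    · rw [hmain]
      constructor
      · intro hEq
        have hz : ((s:ℝ) - 1) * ((8/9)*(n:ℝ)) = 0 := by linear_combination -hEq
        rcases mul_eq_zero.mp hz with h | h
        · have : (s:ℝ) = 1 := by linarith
          exact_mod_cast this
        · linarith
      · intro h
        subst h
        push_cast
        ring
    · rw [hmain]
      constructor
      · intro hEq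
        have hz : ((n:ℝ) - (2*(s:ℝ)+2)) * ((4/9)*(n:ℝ)) = 0 := by linear_combination hEq
        rcases mul_eq_zero.mp hz with h | h
        · have : (n:ℝ) = 2*(s:ℝ)+2 := by linarith
          exact_mod_cast this
        · linarith
      · intro h
        subst h
        push_cast
        ring
end
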